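/- arXiv:1512.01038 — 13 statements merged into one kernel-verified Lean document; each statement's English description precedes it below -/
import Mathlib

section
/- Let α11, α22, β11, β12, γ22 be real numbers and let A(u) be the associated structured diffusion matrix and H(u) the entropy Hessian. Then the matrix H(u)A(u) is positive semidefinite (i.e. zᵀH(u)A(u)z ≥ 0 for all z ∈ ℝ²) for every u ∈ D if and only if α11 ≥ 0, α22 ≥ 0, β12 ≤ α11 + min{β11, γ22}, α11 + β11 ≥ 0, and α22 + γ22 ≥ 0. -/
open Matrix Filter Topology

/-- The Hessian of the entropy density `h(u) = Σ uᵢ(log uᵢ - 1)` with `u₃ = 1-u₁-u₂`. -/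
noncomputable def Hmat (u1 u2 : ℝ) : Matrix (Fin 2) (Fin 2) ℝ :=
  !![1/u1 + 1/(1-u1-u2), 1/(1-u1-u2); 1/(1-u1-u2), 1/u2 + 1/(1-u1-u2)]

/-- The structured diffusion matrix with parameters `(α11, α22, β11, β12, γ22)`,
where `γ21 = α22 - α11 + β12`, `β22 = β11 - γ21`, `γ11 = γ22 - β12`. -/
noncomputable def Amat (a11 a22 b11 b12 g22 u1 u2 : ℝ) : Matrix (Fin 2) (Fin 2) ℝ :=
  !![a11 + b11*u1 + (g22 - b12)*u2, b12*u1;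
     (a22 - a11 + b12)*u2, a22 + (b11 - (a22 - a11 + b12))*u1 + g22*u2]

private lemma lim_nonneg (f : ℝ → ℝ) (hf : Continuous f)
    (h : ∀ x : ℝ, 0 < x → x < 1/2 → 0 ≤ f x) : 0 ≤ f 0 := by
  have h1 : Tendsto f (𝓝[>] (0:ℝ)) (𝓝 (f 0)) := (hf.tendsto 0).mono_left nhdsWithin_le_nhds
  refine ge_of_tendsto h1 ?_
  filter_upwards [Ioo_mem_nhdsGT_of_mem (by norm_num : (0:ℝ) ∈ Set.Ico 0 (1/2))] with x hx
  exact h x hx.1 hx.2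

private lemma quad_nonneg {E F G z1 z2 : ℝ} (hE : 0 ≤ E) (hG : 0 ≤ G) (hD : F^2 ≤ E*G) :
    0 ≤ E*z1^2 + 2*F*z1*z2 + G*z2^2 := by
  rcases eq_or_lt_of_le hE with h | h
  · have hF : F = 0 := by nlinarith [sq_nonneg F]
    rw [← h, hF]
    nlinarith [mul_nonneg hG (sq_nonneg z2)]
  · nlinarith [sq_nonneg (E*z1+F*z2), mul_nonneg (sub_nonneg.2 hD) (sq_nonneg z2), h]

private lemma master (a11 a22 b11 b12 g22 : ℝ) (u1 u2 : ℝ) (hu1 : 0 < u1) (hu2 : 0 < u2)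
    (hs : u1 + u2 < 1) (z : Fin 2 → ℝ) :
    z ⬝ᵥ ((Hmat u1 u2 * Amat a11 a22 b11 b12 g22 u1 u2).mulVec z) =
      ((u2*(a11*(1-u1-u2)*(u1+(1-u1-u2)) + (a11+b11)*u1*(u1+(1-u1-u2)) + (a22+g22)*u1*u2 + (a11+g22-b12)*u2*(1-u1-u2)))*(z 0)^2 + 2*(u1*u2*((a11+b11)*u1 + (a22+g22)*u2 + (a22+b12)*(1-u1-u2)))*(z 0)*(z 1) + (u1*((a11+b11)*u1*u2 + a22*(1-u1-u2)*(u2+(1-u1-u2)) + (a22+g22)*u2*(u2+(1-u1-u2)) + (a11+b11-b12)*u1*(1-u1-u2)))*(z 1)^2) / (u1*u2*(1-u1-u2)) := by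
  have h1 : u1 ≠ 0 := ne_of_gt hu1
  have h2 : u2 ≠ 0 := ne_of_gt hu2
  have h3 : (1:ℝ) - u1 - u2 ≠ 0 := by intro h; rw [sub_sub] at h; nlinarith
  simp only [Hmat, Amat, Matrix.mul_apply, Matrix.mulVec, dotProduct,
    Fin.sum_univ_two, Matrix.cons_val', Matrix.cons_val_zero, Matrix.cons_val_one,
    Matrix.head_cons, Matrix.empty_val', Matrix.cons_val_fin_one, Matrix.head_fin_const,
    Matrix.of_apply]
  field_simp
  ring

set_option maxHeartbeats 1000000 in
/-- The matrix `H(u)A(u)` is positive semidefinite for every `u ∈ D` if and only if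
`α11 ≥ 0`, `α22 ≥ 0`, `β12 ≤ α11 + min{β11, γ22}`, `α11 + β11 ≥ 0`, `α22 + γ22 ≥ 0`. -/
theorem stmt0 (a11 a22 b11 b12 g22 : ℝ) :
    (∀ u1 u2 : ℝ, 0 < u1 → 0 < u2 → u1 + u2 < 1 → ∀ z : Fin 2 → ℝ,
      0 ≤ z ⬝ᵥ ((Hmat u1 u2 * Amat a11 a22 b11 b12 g22 u1 u2).mulVec z)) ↔
    (0 ≤ a11 ∧ 0 ≤ a22 ∧ b12 ≤ a11 + min b11 g22 ∧ 0 ≤ a11 + b11 ∧ 0 ≤ a22 + g22) := by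
  constructor
  · intro hyp
    have hX : ∀ u1 u2 : ℝ, 0 < u1 → 0 < u2 → u1 + u2 < 1 → 0 ≤ (a11*(1-u1-u2)*(u1+(1-u1-u2)) + (a11+b11)*u1*(u1+(1-u1-u2)) + (a22+g22)*u1*u2 + (a11+g22-b12)*u2*(1-u1-u2)) := by
      intro u1 u2 hu1 hu2 hs
      have h := hyp u1 u2 hu1 hu2 hs ![1, 0]
      rw [master a11 a22 b11 b12 g22 u1 u2 hu1 hu2 hs ![1,0]] at h
      have h3 : (0:ℝ) < 1 - u1 - u2 := by linarith
      have hd : (0:ℝ) < u1*u2*(1-u1-u2) := by positivity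
      rw [le_div_iff₀ hd] at h
      simp only [Matrix.cons_val_zero, Matrix.cons_val_one, Matrix.head_cons] at h
      nlinarith [h, mul_pos hu1 (mul_pos hu2 h3)]
    have hY : ∀ u1 u2 : ℝ, 0 < u1 → 0 < u2 → u1 + u2 < 1 → 0 ≤ ((a11+b11)*u1*u2 + a22*(1-u1-u2)*(u2+(1-u1-u2)) + (a22+g22)*u2*(u2+(1-u1-u2)) + (a11+b11-b12)*u1*(1-u1-u2)) := by
      intro u1 u2 hu1 hu2 hs
      have h := hyp u1 u2 hu1 hu2 hs ![0, 1]
      rw [master a11 a22 b11 b12 g22 u1 u2 hu1 hu2 hs ![0,1]] at h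
      have h3 : (0:ℝ) < 1 - u1 - u2 := by linarith
      have hd : (0:ℝ) < u1*u2*(1-u1-u2) := by positivity
      rw [le_div_iff₀ hd] at h
      simp only [Matrix.cons_val_zero, Matrix.cons_val_one, Matrix.head_cons] at h
      nlinarith [h, mul_pos hu1 (mul_pos hu2 h3)]
    have hp : 0 ≤ a11 := by
      have h0 := lim_nonneg (fun e : ℝ => (a11*(1-(e)-(e))*((e)+(1-(e)-(e))) + (a11+b11)*(e)*((e)+(1-(e)-(e))) + (a22+g22)*(e)*(e) + (a11+g22-b12)*(e)*(1-(e)-(e))))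
        (by fun_prop)
        (fun x hx1 hx2 => hX x x hx1 hx1 (by linarith))
      norm_num at h0
      linarith
    have hq : 0 ≤ a22 := by
      have h0 := lim_nonneg (fun e : ℝ => ((a11+b11)*(e)*(e) + a22*(1-(e)-(e))*((e)+(1-(e)-(e))) + (a22+g22)*(e)*((e)+(1-(e)-(e))) + (a11+b11-b12)*(e)*(1-(e)-(e))))
        (by fun_prop)
        (fun x hx1 hx2 => hY x x hx1 hx1 (by linarith))
      norm_num at h0
      linarith
    have hr : 0 ≤ a11 + b11 := by
      have h0 := lim_nonneg (fun e : ℝ => (a11*(1-(1-2*e)-(e))*((1-2*e)+(1-(1-2*e)-(e))) + (a11+b11)*(1-2*e)*((1-2*e)+(1-(1-2*e)-(e))) + (a22+g22)*(1-2*e)*(e) + (a11+g22-b12)*(e)*(1-(1-2*e)-(e))))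
        (by fun_prop)
        (fun x hx1 hx2 => hX (1-2*x) x (by linarith) hx1 (by linarith))
      norm_num at h0
      linarith
    have ht : 0 ≤ a22 + g22 := by
      have h0 := lim_nonneg (fun e : ℝ => ((a11+b11)*(e)*(1-2*e) + a22*(1-(e)-(1-2*e))*((1-2*e)+(1-(e)-(1-2*e))) + (a22+g22)*(1-2*e)*((1-2*e)+(1-(e)-(1-2*e))) + (a11+b11-b12)*(e)*(1-(e)-(1-2*e))))
        (by fun_prop)
        (fun x hx1 hx2 => hY x (1-2*x) hx1 (by linarith) (by linarith))
      norm_num at h0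
      linarith
    have hm2 : 0 ≤ a11 + g22 - b12 := by
      have h0 := lim_nonneg
        (fun e : ℝ => a11*(e^2+e) + (a11+b11)*e*(e^2+e) + (a22+g22)*e*(1-e-e^2)
          + (a11+g22-b12)*(1-e-e^2))
        (by fun_prop) ?_
      · norm_num at h0; linarith
      · intro x hx1 hx2
        show (0:ℝ) ≤ a11*(x^2+x) + (a11+b11)*x*(x^2+x) + (a22+g22)*x*(1-x-x^2) + (a11+g22-b12)*(1-x-x^2)
        have hx := hX (x^2) (1-x-x^2) (by positivity) (by nlinarith) (by nlinarith)
        nlinarith [hx, hx1]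
    have hm1 : 0 ≤ a11 + b11 - b12 := by
      have h0 := lim_nonneg
        (fun e : ℝ => (a11+b11)*(1-e-e^2)*e + a22*(e^2+e) + (a22+g22)*e*(e^2+e)
          + (a11+b11-b12)*(1-e-e^2))
        (by fun_prop) ?_
      · norm_num at h0; linarith
      · intro x hx1 hx2
        show (0:ℝ) ≤ (a11+b11)*(1-x-x^2)*x + a22*(x^2+x) + (a22+g22)*x*(x^2+x) + (a11+b11-b12)*(1-x-x^2)
        have hy := hY (1-x-x^2) (x^2) (by nlinarith) (by positivity) (by nlinarith)
        nlinarith [hy, hx1]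
    refine ⟨hp, hq, ?_, hr, ht⟩
    rcases le_total b11 g22 with h | h
    · rw [min_eq_left h]; linarith
    · rw [min_eq_right h]; linarith
  · rintro ⟨hp, hq, hm, hr, ht⟩
    have hm1 : 0 ≤ a11 + b11 - b12 := by
      have := min_le_left b11 g22; linarith
    have hm2 : 0 ≤ a11 + g22 - b12 := by
      have := min_le_right b11 g22; linarith
    intro u1 u2 hu1 hu2 hs z
    rw [master a11 a22 b11 b12 g22 u1 u2 hu1 hu2 hs z]
    have h3 : (0:ℝ) < 1 - u1 - u2 := by linarith
    have hu13 : (0:ℝ) ≤ u1 + (1-u1-u2) := by linarith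
    have hu23 : (0:ℝ) ≤ u2 + (1-u1-u2) := by linarith
    have hE : 0 ≤ (u2*(a11*(1-u1-u2)*(u1+(1-u1-u2)) + (a11+b11)*u1*(u1+(1-u1-u2)) + (a22+g22)*u1*u2 + (a11+g22-b12)*u2*(1-u1-u2))) := by
      have t1 : 0 ≤ a11*(1-u1-u2)*(u1+(1-u1-u2)) :=
        mul_nonneg (mul_nonneg hp h3.le) hu13
      have t2 : 0 ≤ (a11+b11)*u1*(u1+(1-u1-u2)) :=
        mul_nonneg (mul_nonneg hr hu1.le) hu13
      have t3 : 0 ≤ (a22+g22)*u1*u2 :=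
        mul_nonneg (mul_nonneg ht hu1.le) hu2.le
      have t4 : 0 ≤ (a11+g22-b12)*u2*(1-u1-u2) :=
        mul_nonneg (mul_nonneg hm2 hu2.le) h3.le
      have hXn : 0 ≤ (a11*(1-u1-u2)*(u1+(1-u1-u2)) + (a11+b11)*u1*(u1+(1-u1-u2)) + (a22+g22)*u1*u2 + (a11+g22-b12)*u2*(1-u1-u2)) := by linarith
      exact mul_nonneg hu2.le hXn
    have hG : 0 ≤ (u1*((a11+b11)*u1*u2 + a22*(1-u1-u2)*(u2+(1-u1-u2)) + (a22+g22)*u2*(u2+(1-u1-u2)) + (a11+b11-b12)*u1*(1-u1-u2))) := by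
      have t1 : 0 ≤ (a11+b11)*u1*u2 :=
        mul_nonneg (mul_nonneg hr hu1.le) hu2.le
      have t2 : 0 ≤ a22*(1-u1-u2)*(u2+(1-u1-u2)) :=
        mul_nonneg (mul_nonneg hq h3.le) hu23
      have t3 : 0 ≤ (a22+g22)*u2*(u2+(1-u1-u2)) :=
        mul_nonneg (mul_nonneg ht hu2.le) hu23
      have t4 : 0 ≤ (a11+b11-b12)*u1*(1-u1-u2) :=
        mul_nonneg (mul_nonneg hm1 hu1.le) h3.le
      have hYn : 0 ≤ ((a11+b11)*u1*u2 + a22*(1-u1-u2)*(u2+(1-u1-u2)) + (a22+g22)*u2*(u2+(1-u1-u2)) + (a11+b11-b12)*u1*(1-u1-u2)) := by linarith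
      exact mul_nonneg hu1.le hYn
    have hK : 0 ≤ ((a11+b11)*(a11+b11-b12)*u1^2 + ((a11+b11)*(a11+g22-b12) + (a22+g22)*(a11+b11-b12))*u1*u2 + (a22+g22)*(a11+g22-b12)*u2^2 + (a11*(a11+b11-b12) + a22*(a11+b11))*u1*(1-u1-u2) + (a22*(a11+g22-b12) + a11*(a22+g22))*u2*(1-u1-u2) + a11*a22*(1-u1-u2)^2) := by
      have t1 : 0 ≤ (a11+b11)*(a11+b11-b12)*u1^2 :=
        mul_nonneg (mul_nonneg hr hm1) (sq_nonneg u1)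
      have t2 : 0 ≤ ((a11+b11)*(a11+g22-b12) + (a22+g22)*(a11+b11-b12))*u1*u2 :=
        mul_nonneg (mul_nonneg (add_nonneg (mul_nonneg hr hm2) (mul_nonneg ht hm1)) hu1.le) hu2.le
      have t3 : 0 ≤ (a22+g22)*(a11+g22-b12)*u2^2 :=
        mul_nonneg (mul_nonneg ht hm2) (sq_nonneg u2)
      have t4 : 0 ≤ (a11*(a11+b11-b12) + a22*(a11+b11))*u1*(1-u1-u2) :=
        mul_nonneg (mul_nonneg (add_nonneg (mul_nonneg hp hm1) (mul_nonneg hq hr)) hu1.le) h3.le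
      have t5 : 0 ≤ (a22*(a11+g22-b12) + a11*(a22+g22))*u2*(1-u1-u2) :=
        mul_nonneg (mul_nonneg (add_nonneg (mul_nonneg hq hm2) (mul_nonneg hp ht)) hu2.le) h3.le
      have t6 : 0 ≤ a11*a22*(1-u1-u2)^2 :=
        mul_nonneg (mul_nonneg hp hq) (sq_nonneg _)
      linarith
    have hD : (u1*u2*((a11+b11)*u1 + (a22+g22)*u2 + (a22+b12)*(1-u1-u2)))^2 ≤ (u2*(a11*(1-u1-u2)*(u1+(1-u1-u2)) + (a11+b11)*u1*(u1+(1-u1-u2)) + (a22+g22)*u1*u2 + (a11+g22-b12)*u2*(1-u1-u2)))*(u1*((a11+b11)*u1*u2 + a22*(1-u1-u2)*(u2+(1-u1-u2)) + (a22+g22)*u2*(u2+(1-u1-u2)) + (a11+b11-b12)*u1*(1-u1-u2))) := by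
      have hd : (0:ℝ) ≤ u1*u2*(1-u1-u2) := by positivity
      calc (u1*u2*((a11+b11)*u1 + (a22+g22)*u2 + (a22+b12)*(1-u1-u2)))^2 = (u2*(a11*(1-u1-u2)*(u1+(1-u1-u2)) + (a11+b11)*u1*(u1+(1-u1-u2)) + (a22+g22)*u1*u2 + (a11+g22-b12)*u2*(1-u1-u2)))*(u1*((a11+b11)*u1*u2 + a22*(1-u1-u2)*(u2+(1-u1-u2)) + (a22+g22)*u2*(u2+(1-u1-u2)) + (a11+b11-b12)*u1*(1-u1-u2))) - (u1*u2*(1-u1-u2))*((a11+b11)*(a11+b11-b12)*u1^2 + ((a11+b11)*(a11+g22-b12) + (a22+g22)*(a11+b11-b12))*u1*u2 + (a22+g22)*(a11+g22-b12)*u2^2 + (a11*(a11+b11-b12) + a22*(a11+b11))*u1*(1-u1-u2) + (a22*(a11+g22-b12) + a11*(a22+g22))*u2*(1-u1-u2) + a11*a22*(1-u1-u2)^2) := by ring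
        _ ≤ (u2*(a11*(1-u1-u2)*(u1+(1-u1-u2)) + (a11+b11)*u1*(u1+(1-u1-u2)) + (a22+g22)*u1*u2 + (a11+g22-b12)*u2*(1-u1-u2)))*(u1*((a11+b11)*u1*u2 + a22*(1-u1-u2)*(u2+(1-u1-u2)) + (a22+g22)*u2*(u2+(1-u1-u2)) + (a11+b11-b12)*u1*(1-u1-u2))) := by linarith [mul_nonneg hd hK]
    have hquad := quad_nonneg hE hG hD (z1 := z 0) (z2 := z 1)
    have hd : (0:ℝ) < u1*u2*(1-u1-u2) := by positivity
    exact div_nonneg hquad hd.le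
end

section
/- Let α11, α22, β11, β12, γ22 be real numbers satisfying α11 > 0, α22 > 0, β12 < α11 + min{β11, γ22}, α11 + β11 ≥ 0, and α22 + γ22 ≥ 0. Then there exists ε > 0 such that for all z = (z1,z2) ∈ ℝ² and all u ∈ D, zᵀH(u)A(u)z ≥ ε(z1²/u1 + z2²/u2). -/
open Matrix

/-- A 2×2 quadratic form with nonnegative diagonal and nonnegative determinant
is positive semidefinite. -/
lemma quad_nonneg_s1 (a b c x y : ℝ) (ha : 0 ≤ a) (hc : 0 ≤ c) (h : b^2 ≤ a*c) :
    0 ≤ a*x^2 + 2*b*x*y + c*y^2 := by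
  rcases eq_or_lt_of_le ha with h0 | h0
  · have hb : b = 0 := by nlinarith [sq_nonneg b]
    rw [← h0, hb]
    nlinarith [mul_nonneg hc (sq_nonneg y)]
  · nlinarith [sq_nonneg (a*x + b*y), mul_nonneg (sub_nonneg.2 h) (sq_nonneg y)]

set_option maxHeartbeats 2000000 in
/-- Under the strict parameter conditions, there exists `ε > 0` such that
`zᵀH(u)A(u)z ≥ ε(z₁²/u₁ + z₂²/u₂)` for all `z ∈ ℝ²` and all `u ∈ D`. -/
theorem stmt1 (a11 a22 b11 b12 g22 : ℝ)
    (h1 : 0 < a11) (h2 : 0 < a22) (h3 : b12 < a11 + min b11 g22)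
    (h4 : 0 ≤ a11 + b11) (h5 : 0 ≤ a22 + g22) :
    ∃ ε > (0:ℝ), ∀ (z : Fin 2 → ℝ) (u1 u2 : ℝ), 0 < u1 → 0 < u2 → u1 + u2 < 1 →
      ε * ((z 0)^2 / u1 + (z 1)^2 / u2) ≤
        z ⬝ᵥ ((Hmat u1 u2 * Amat a11 a22 b11 b12 g22 u1 u2).mulVec z) := by
  have hd1 : 0 < a11 + b11 - b12 := by
    have := min_le_left b11 g22; linarith
  have hd2 : 0 < a11 + g22 - b12 := by
    have := min_le_right b11 g22; linarith
  set e := min (min a11 a22) (min (a11 + b11 - b12) (a11 + g22 - b12)) with hedef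
  have he0 : 0 < e := lt_min (lt_min h1 h2) (lt_min hd1 hd2)
  refine ⟨e, he0, ?_⟩
  intro z u1 u2 hu1 hu2 hu12
  have hu3 : 0 < 1 - u1 - u2 := by linarith
  have hx1 : 0 ≤ a11 - e := by
    have : e ≤ a11 := le_trans (min_le_left _ _) (min_le_left _ _); linarith
  have hx2 : 0 ≤ a22 - e := by
    have : e ≤ a22 := le_trans (min_le_left _ _) (min_le_right _ _); linarith
  have hy1 : 0 ≤ a11 + b11 - b12 - e := by
    have : e ≤ a11 + b11 - b12 := le_trans (min_le_right _ _) (min_le_left _ _); linarith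
  have hy2 : 0 ≤ a11 + g22 - b12 - e := by
    have : e ≤ a11 + g22 - b12 := le_trans (min_le_right _ _) (min_le_right _ _); linarith
  have hu1' := hu1.le
  have hu2' := hu2.le
  have hu3' := hu3.le
  -- the three coefficients of the quadratic form (u1*u2*u3 times the difference)
  have ha : 0 ≤ (a11*(1-u1-u2) + (a11+b11)*u1 + (a11+g22-b12)*u2 - e)*u2*(1-u1-u2) + ((a11+b11)*u1+(a22+g22)*u2)*u1*u2 + a11*u1*u2*(1-u1-u2) := by
    linarith [mul_nonneg (mul_nonneg hx1 hu2') (sq_nonneg (1-u1-u2)),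
      mul_nonneg (mul_nonneg (mul_nonneg (add_nonneg hx1 h4) hu1') hu2') hu3',
      mul_nonneg (mul_nonneg (mul_nonneg hy2 hu2') hu2') hu3',
      mul_nonneg (mul_nonneg h4 (sq_nonneg u1)) hu2',
      mul_nonneg (mul_nonneg (mul_nonneg h5 hu1') hu2') hu2']
  have hc : 0 ≤ (a22*(1-u1-u2) + (a11+b11-b12)*u1 + (a22+g22)*u2 - e)*u1*(1-u1-u2) + ((a11+b11)*u1+(a22+g22)*u2)*u1*u2 + a22*u1*u2*(1-u1-u2) := by
    linarith [mul_nonneg (mul_nonneg hx2 hu1') (sq_nonneg (1-u1-u2)),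
      mul_nonneg (mul_nonneg (mul_nonneg (add_nonneg hx2 h5) hu1') hu2') hu3',
      mul_nonneg (mul_nonneg (mul_nonneg hy1 hu1') hu1') hu3',
      mul_nonneg (mul_nonneg h5 (sq_nonneg u2)) hu1',
      mul_nonneg (mul_nonneg (mul_nonneg h4 hu1') hu1') hu2']
  have hdet : (((a11+b11)*u1+(a22+g22)*u2)*u1*u2 + (a22+b12)*u1*u2*(1-u1-u2))^2 ≤
      ((a11*(1-u1-u2) + (a11+b11)*u1 + (a11+g22-b12)*u2 - e)*u2*(1-u1-u2) + ((a11+b11)*u1+(a22+g22)*u2)*u1*u2 + a11*u1*u2*(1-u1-u2)) *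
      ((a22*(1-u1-u2) + (a11+b11-b12)*u1 + (a22+g22)*u2 - e)*u1*(1-u1-u2) + ((a11+b11)*u1+(a22+g22)*u2)*u1*u2 + a22*u1*u2*(1-u1-u2)) := by
    have hid : ((a11*(1-u1-u2) + (a11+b11)*u1 + (a11+g22-b12)*u2 - e)*u2*(1-u1-u2) + ((a11+b11)*u1+(a22+g22)*u2)*u1*u2 + a11*u1*u2*(1-u1-u2)) *
        ((a22*(1-u1-u2) + (a11+b11-b12)*u1 + (a22+g22)*u2 - e)*u1*(1-u1-u2) + ((a11+b11)*u1+(a22+g22)*u2)*u1*u2 + a22*u1*u2*(1-u1-u2)) -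
        (((a11+b11)*u1+(a22+g22)*u2)*u1*u2 + (a22+b12)*u1*u2*(1-u1-u2))^2 =
        u1*u2*((a11-e)*(a22-e)*(1-u1-u2)^4 + ((a22-e)*(a11+g22-b12-e)+(a11-e)*(a22+g22)+(a11-e)*(a22-e))*u2*(1-u1-u2)^3 + ((a11+g22-b12-e)*(a22+g22)+(a22-e)*(a11+g22-b12-e)+(a11-e)*(a22+g22))*u2^2*(1-u1-u2)^2 + (a11+g22-b12-e)*(a22+g22)*u2^3*(1-u1-u2) + ((a22-e)*(a11+b11)+(a11-e)*(a11+b11-b12-e)+(a11-e)*(a22-e))*u1*(1-u1-u2)^3 + ((a22-e)*(a11+b11)+(a11-e)*(a22+g22)+(a22-e)*(a11+g22-b12-e)+(a11+b11)*(a11+g22-b12-e)+(a11-e)*(a11+b11-b12-e)+(a11+b11-b12-e)*(a22+g22))*u1*u2*(1-u1-u2)^2 + ((a11+b11)*(a11+g22-b12-e)+(a22+g22)*((a11+b11-b12-e)+(a11+g22-b12-e)))*u1*u2^2*(1-u1-u2) + ((a11+b11-b12-e)*(a11+b11)+(a22-e)*(a11+b11)+(a11-e)*(a11+b11-b12-e))*u1^2*(1-u1-u2)^2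 + ((a11+b11-b12-e)*(a22+g22)+(a11+b11)*((a11+b11-b12-e)+(a11+g22-b12-e)))*u1^2*u2*(1-u1-u2) + (a11+b11-b12-e)*(a11+b11)*u1^3*(1-u1-u2)) := by
      ring
    have hD : 0 ≤ (a11-e)*(a22-e)*(1-u1-u2)^4 + ((a22-e)*(a11+g22-b12-e)+(a11-e)*(a22+g22)+(a11-e)*(a22-e))*u2*(1-u1-u2)^3 + ((a11+g22-b12-e)*(a22+g22)+(a22-e)*(a11+g22-b12-e)+(a11-e)*(a22+g22))*u2^2*(1-u1-u2)^2 + (a11+g22-b12-e)*(a22+g22)*u2^3*(1-u1-u2) + ((a22-e)*(a11+b11)+(a11-e)*(a11+b11-b12-e)+(a11-e)*(a22-e))*u1*(1-u1-u2)^3 + ((a22-e)*(a11+b11)+(a11-e)*(a22+g22)+(a22-e)*(a11+g22-b12-e)+(a11+b11)*(a11+g22-b12-e)+(a11-e)*(a11+b11-b12-e)+(a11+b11-b12-e)*(a22+g22))*u1*u2*(1-u1-u2)^2 + ((a11+b11)*(a11+g22-b12-e)+(a22+g22)*((a11+b11-b12-e)+(a11+g22-b12-e)))*u1*u2^2*(1-u1-u2)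 + ((a11+b11-b12-e)*(a11+b11)+(a22-e)*(a11+b11)+(a11-e)*(a11+b11-b12-e))*u1^2*(1-u1-u2)^2 + ((a11+b11-b12-e)*(a22+g22)+(a11+b11)*((a11+b11-b12-e)+(a11+g22-b12-e)))*u1^2*u2*(1-u1-u2) + (a11+b11-b12-e)*(a11+b11)*u1^3*(1-u1-u2) := by
      have c1 : 0 ≤ (a11-e)*(a22-e) := mul_nonneg hx1 hx2
      have c2 : 0 ≤ (a22-e)*(a11+g22-b12-e)+(a11-e)*(a22+g22)+(a11-e)*(a22-e) :=
        add_nonneg (add_nonneg (mul_nonneg hx2 hy2) (mul_nonneg hx1 h5)) (mul_nonneg hx1 hx2)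
      have c3 : 0 ≤ (a11+g22-b12-e)*(a22+g22)+(a22-e)*(a11+g22-b12-e)+(a11-e)*(a22+g22) :=
        add_nonneg (add_nonneg (mul_nonneg hy2 h5) (mul_nonneg hx2 hy2)) (mul_nonneg hx1 h5)
      have c4 : 0 ≤ (a11+g22-b12-e)*(a22+g22) := mul_nonneg hy2 h5
      have c5 : 0 ≤ (a22-e)*(a11+b11)+(a11-e)*(a11+b11-b12-e)+(a11-e)*(a22-e) :=
        add_nonneg (add_nonneg (mul_nonneg hx2 h4) (mul_nonneg hx1 hy1)) (mul_nonneg hx1 hx2)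
      have c6 : 0 ≤ (a22-e)*(a11+b11)+(a11-e)*(a22+g22)+(a22-e)*(a11+g22-b12-e)+(a11+b11)*(a11+g22-b12-e)+(a11-e)*(a11+b11-b12-e)+(a11+b11-b12-e)*(a22+g22) :=
        add_nonneg (add_nonneg (add_nonneg (add_nonneg (add_nonneg (mul_nonneg hx2 h4) (mul_nonneg hx1 h5)) (mul_nonneg hx2 hy2)) (mul_nonneg h4 hy2)) (mul_nonneg hx1 hy1)) (mul_nonneg hy1 h5)
      have c7 : 0 ≤ (a11+b11)*(a11+g22-b12-e)+(a22+g22)*((a11+b11-b12-e)+(a11+g22-b12-e)) :=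
        add_nonneg (mul_nonneg h4 hy2) (mul_nonneg h5 (add_nonneg hy1 hy2))
      have c8 : 0 ≤ (a11+b11-b12-e)*(a11+b11)+(a22-e)*(a11+b11)+(a11-e)*(a11+b11-b12-e) :=
        add_nonneg (add_nonneg (mul_nonneg hy1 h4) (mul_nonneg hx2 h4)) (mul_nonneg hx1 hy1)
      have c9 : 0 ≤ (a11+b11-b12-e)*(a22+g22)+(a11+b11)*((a11+b11-b12-e)+(a11+g22-b12-e)) :=
        add_nonneg (mul_nonneg hy1 h5) (mul_nonneg h4 (add_nonneg hy1 hy2))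
      have c10 : 0 ≤ (a11+b11-b12-e)*(a11+b11) := mul_nonneg hy1 h4
      have m1 : 0 ≤ (1-u1-u2)^4 := by positivity
      have m2 : 0 ≤ u2*(1-u1-u2)^3 := by positivity
      have m3 : 0 ≤ u2^2*(1-u1-u2)^2 := by positivity
      have m4 : 0 ≤ u2^3*(1-u1-u2) := by positivity
      have m5 : 0 ≤ u1*(1-u1-u2)^3 := by positivity
      have m6 : 0 ≤ u1*u2*(1-u1-u2)^2 := by positivity
      have m7 : 0 ≤ u1*u2^2*(1-u1-u2) := by positivity
      have m8 : 0 ≤ u1^2*(1-u1-u2)^2 := by positivity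
      have m9 : 0 ≤ u1^2*u2*(1-u1-u2) := by positivity
      have m10 : 0 ≤ u1^3*(1-u1-u2) := by positivity
      linarith [mul_nonneg c1 m1, mul_nonneg c2 m2, mul_nonneg c3 m3, mul_nonneg c4 m4,
        mul_nonneg c5 m5, mul_nonneg c6 m6, mul_nonneg c7 m7, mul_nonneg c8 m8,
        mul_nonneg c9 m9, mul_nonneg c10 m10]
    linarith [mul_nonneg (mul_nonneg hu1' hu2') hD]
  have hF : 0 ≤ ((a11*(1-u1-u2) + (a11+b11)*u1 + (a11+g22-b12)*u2 - e)*u2*(1-u1-u2) + ((a11+b11)*u1+(a22+g22)*u2)*u1*u2 + a11*u1*u2*(1-u1-u2))*(z 0)^2 + 2*(((a11+b11)*u1+(a22+g22)*u2)*u1*u2 + (a22+b12)*u1*u2*(1-u1-u2))*(z 0)*(z 1) + ((a22*(1-u1-u2) + (a11+b11-b12)*u1 + (a22+g22)*u2 - e)*u1*(1-u1-u2) + ((a11+b11)*u1+(a22+g22)*u2)*u1*u2 + a22*u1*u2*(1-u1-u2))*(z 1)^2 :=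
    quad_nonneg_s1 _ _ _ (z 0) (z 1) ha hc hdet
  rw [← sub_nonneg]
  have hu1n : u1 ≠ 0 := ne_of_gt hu1
  have hu2n : u2 ≠ 0 := ne_of_gt hu2
  have hu3n : (1:ℝ)-u1-u2 ≠ 0 := ne_of_gt hu3
  have key : z ⬝ᵥ ((Hmat u1 u2 * Amat a11 a22 b11 b12 g22 u1 u2).mulVec z) -
      e * ((z 0)^2 / u1 + (z 1)^2 / u2) =
      (((a11*(1-u1-u2) + (a11+b11)*u1 + (a11+g22-b12)*u2 - e)*u2*(1-u1-u2) + ((a11+b11)*u1+(a22+g22)*u2)*u1*u2 + a11*u1*u2*(1-u1-u2))*(z 0)^2 + 2*(((a11+b11)*u1+(a22+g22)*u2)*u1*u2 + (a22+b12)*u1*u2*(1-u1-u2))*(z 0)*(z 1) + ((a22*(1-u1-u2) + (a11+b11-b12)*u1 + (a22+g22)*u2 - e)*u1*(1-u1-u2) + ((a11+b11)*u1+(a22+g22)*u2)*u1*u2 + a22*u1*u2*(1-u1-u2))*(z 1)^2) / (u1*u2*(1-u1-u2)) := by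
    simp only [Hmat, Amat, Matrix.mulVec, dotProduct, Matrix.mul_apply,
      Fin.sum_univ_two, Matrix.cons_val', Matrix.cons_val_zero, Matrix.cons_val_one,
      Matrix.head_cons, Matrix.head_fin_const, Matrix.empty_val', Matrix.cons_val_fin_one, Matrix.of_apply]
    field_simp
    ring
  rw [key]
  exact div_nonneg hF (by positivity)
end

section
/- Let α11 = α22 = 0, let β11 > 0, γ22 > 0, and β12 < min{β11, γ22}. Then there exists ε > 0 such that for all z ∈ ℝ² and all u ∈ D, zᵀH(u)A(u)z ≥ ε|z|², where |z|² = z1² + z2². -/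
open Matrix

set_option maxHeartbeats 1000000 in
theorem stmt2_aux (b11 b12 g22 : ℝ) (h1 : 0 < b11) (h2 : 0 < g22) (h3 : b12 < min b11 g22) :
    ∃ ε > (0:ℝ), ∀ (z : Fin 2 → ℝ) (u1 u2 : ℝ), 0 < u1 → 0 < u2 → u1 + u2 < 1 →
      ε * ((z 0)^2 + (z 1)^2) ≤
        z ⬝ᵥ ((Hmat u1 u2 * Amat 0 0 b11 b12 g22 u1 u2).mulVec z) := by
  have hb : b12 < b11 := lt_of_lt_of_le h3 (min_le_left _ _)
  have hg : b12 < g22 := lt_of_lt_of_le h3 (min_le_right _ _)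
  refine ⟨min (min b11 g22) (min (b11 - b12) (g22 - b12)),
    lt_min (lt_min h1 h2) (lt_min (by linarith) (by linarith)), ?_⟩
  intro z u1 u2 h1' h2' h3'
  set ε := min (min b11 g22) (min (b11 - b12) (g22 - b12)) with hε
  have hu1 : u1 ≠ 0 := h1'.ne'
  have hu2 : u2 ≠ 0 := h2'.ne'
  have hu3 : (0:ℝ) < 1 - u1 - u2 := by linarith
  have key : z ⬝ᵥ ((Hmat u1 u2 * Amat 0 0 b11 b12 g22 u1 u2).mulVec z) =
      b11*(z 0)^2 + g22*(z 1)^2 + 2*b12*(z 0)*(z 1)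
      + ((g22-b12)*u2/u1)*(z 0)^2 + ((b11-b12)*u1/u2)*(z 1)^2
      + ((b11*u1+g22*u2)/(1-u1-u2))*(z 0 + z 1)^2 := by
    have hu3' : 1 - u1 - u2 ≠ 0 := hu3.ne'
    simp [Hmat, Amat, Matrix.mul_apply, dotProduct, mulVec, Fin.sum_univ_succ]
    field_simp
    ring
  rw [key]
  set x := z 0
  set y := z 1
  set p := (g22-b12)*u2/u1 with hp
  set q := (b11-b12)*u1/u2 with hq
  set S := (b11*u1+g22*u2)/(1-u1-u2) with hS
  have hp0 : 0 < p := div_pos (mul_pos (by linarith) h2') h1'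
  have hq0 : 0 < q := div_pos (mul_pos (by linarith) h1') h2'
  have hS0 : 0 < S := div_pos (by nlinarith) hu3
  have hpq : p * q = (g22 - b12) * (b11 - b12) := by
    rw [hp, hq, div_mul_div_comm, div_eq_iff (mul_ne_zero hu1 hu2)]; ring
  have he1 : ε ≤ b11 := le_trans (min_le_left _ _) (min_le_left _ _)
  have he2 : ε ≤ g22 := le_trans (min_le_left _ _) (min_le_right _ _)
  have he3 : ε ≤ b11 - b12 := le_trans (min_le_right _ _) (min_le_left _ _)
  have he4 : ε ≤ g22 - b12 := le_trans (min_le_right _ _) (min_le_right _ _)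
  have hSxy : 0 ≤ S*(x+y)^2 := mul_nonneg hS0.le (sq_nonneg (x+y))
  rcases le_or_gt 0 b12 with hs | hs
  · nlinarith [hSxy, mul_nonneg hp0.le (sq_nonneg x), mul_nonneg hq0.le (sq_nonneg y),
      mul_nonneg hs (sq_nonneg (x+y)),
      mul_nonneg (by linarith : (0:ℝ) ≤ b11 - b12 - ε) (sq_nonneg x),
      mul_nonneg (by linarith : (0:ℝ) ≤ g22 - b12 - ε) (sq_nonneg y)]
  · have hpqb : b12^2 < p * q := by rw [hpq]; nlinarith
    have ha : 0 ≤ p*x^2 + q*y^2 :=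
      add_nonneg (mul_nonneg hp0.le (sq_nonneg x)) (mul_nonneg hq0.le (sq_nonneg y))
    have hsq : (2*b12*x*y)^2 ≤ (p*x^2 + q*y^2)^2 := by
      nlinarith [sq_nonneg (p*x^2 - q*y^2),
        mul_nonneg (sub_nonneg.2 hpqb.le) (sq_nonneg (x*y))]
    have hkey : 0 ≤ p*x^2 + q*y^2 + 2*b12*x*y := by
      nlinarith [hsq, ha, sq_nonneg (p*x^2 + q*y^2 + 2*b12*x*y)]
    nlinarith [hkey, hSxy,
      mul_nonneg (by linarith : (0:ℝ) ≤ b11 - ε) (sq_nonneg x),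
      mul_nonneg (by linarith : (0:ℝ) ≤ g22 - ε) (sq_nonneg y)]

/-- With `α11 = α22 = 0`, `β11 > 0`, `γ22 > 0`, `β12 < min{β11, γ22}`, there is `ε > 0`
with `zᵀH(u)A(u)z ≥ ε|z|²` for all `z ∈ ℝ²` and all `u ∈ D`. -/
theorem stmt2 (b11 b12 g22 : ℝ) (h1 : 0 < b11) (h2 : 0 < g22) (h3 : b12 < min b11 g22) :
    ∃ ε > (0:ℝ), ∀ (z : Fin 2 → ℝ) (u1 u2 : ℝ), 0 < u1 → 0 < u2 → u1 + u2 < 1 →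
      ε * ((z 0)^2 + (z 1)^2) ≤
        z ⬝ᵥ ((Hmat u1 u2 * Amat 0 0 b11 b12 g22 u1 u2).mulVec z) := by
  exact stmt2_aux b11 b12 g22 h1 h2 h3
end

section
/- Let α11, α22, β11, β12, γ22 be real numbers satisfying α11 ≥ 0, α22 ≥ 0, β12 ≤ α11 + min{β11, γ22}, α11 + β11 ≥ 0, and α22 + γ22 ≥ 0. Then det A(u) ≥ 0 for every u in the closed triangle {(u1,u2) : u1 ≥ 0, u2 ≥ 0, u1+u2 ≤ 1}. -/
open Matrix

/-- Under the parameter conditions, `det A(u) ≥ 0` on the closed triangle. -/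
theorem stmt3 (a11 a22 b11 b12 g22 : ℝ)
    (h1 : 0 ≤ a11) (h2 : 0 ≤ a22) (h3 : b12 ≤ a11 + min b11 g22)
    (h4 : 0 ≤ a11 + b11) (h5 : 0 ≤ a22 + g22) :
    ∀ u1 u2 : ℝ, 0 ≤ u1 → 0 ≤ u2 → u1 + u2 ≤ 1 →
      0 ≤ (Amat a11 a22 b11 b12 g22 u1 u2).det := by
  intro u1 u2 hu1 hu2 hsum
  have hc1 : 0 ≤ a11 + b11 - b12 := by
    have := min_le_left b11 g22; linarith
  have hc2 : 0 ≤ a11 + g22 - b12 := by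
    have := min_le_right b11 g22; linarith
  have hs : 0 ≤ 1 - u1 - u2 := by linarith
  simp only [Amat, Matrix.det_fin_two_of]
  nlinarith [mul_nonneg (mul_nonneg h1 h2) (mul_nonneg hs hs),
    mul_nonneg (mul_nonneg h4 hc1) (mul_nonneg hu1 hu1),
    mul_nonneg (mul_nonneg h5 hc2) (mul_nonneg hu2 hu2),
    mul_nonneg (add_nonneg (mul_nonneg h1 hc1) (mul_nonneg h2 h4)) (mul_nonneg hs hu1),
    mul_nonneg (add_nonneg (mul_nonneg h1 h5) (mul_nonneg h2 hc2)) (mul_nonneg hs hu2),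
    mul_nonneg (add_nonneg (mul_nonneg h4 hc2) (mul_nonneg h5 hc1)) (mul_nonneg hu1 hu2)]
end

section
/- Let α11, α22, β11, β12, γ22 be real numbers. The map u = (u1,u2) ↦ det A(u) is a quadratic polynomial in (u1,u2); let C ∈ ℝ^{2×2} denote its (constant) Hessian matrix. Then det C = −(β11β12 + γ22(α11 − α22 − β12))²; in particular det C ≤ 0. -/
open Matrix

/-- If `C` is the (symmetric, constant) Hessian of the quadratic polynomial
`u ↦ det A(u)`, then `det C = -(β11β12 + γ22(α11 - α22 - β12))² ≤ 0`. -/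
theorem stmt4 (a11 a22 b11 b12 g22 : ℝ) (C : Matrix (Fin 2) (Fin 2) ℝ)
    (b : Fin 2 → ℝ) (c : ℝ) (hsym : C 0 1 = C 1 0)
    (hC : ∀ u1 u2 : ℝ, (Amat a11 a22 b11 b12 g22 u1 u2).det =
      (C 0 0 * u1^2 + (C 0 1 + C 1 0) * u1 * u2 + C 1 1 * u2^2) / 2
        + b 0 * u1 + b 1 * u2 + c) :
    C.det = -(b11*b12 + g22*(a11 - a22 - b12))^2 ∧ C.det ≤ 0 := by
  have h00 := hC 0 0
  have h10 := hC 1 0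
  have hm10 := hC (-1) 0
  have h01 := hC 0 1
  have h0m1 := hC 0 (-1)
  have h11 := hC 1 1
  have hmm := hC (-1) (-1)
  simp only [Amat, Matrix.det_fin_two_of] at h00 h10 hm10 h01 h0m1 h11 hmm
  have e00 : C 0 0 = 2 * b11 * (b11 + a11 - a22 - b12) := by linear_combination 2*h00 - h10 - hm10
  have e11 : C 1 1 = 2 * g22 * (g22 - b12) := by linear_combination 2*h00 - h01 - h0m1
  have e01' : C 0 1 = b11 * g22 + (g22 - b12) * (b11 + a11 - a22 - b12)
      - b12 * (a22 - a11 + b12) := by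
    linear_combination (-1/2)*(h11 + hmm - 2*h00) - (1/2)*e00 - (1/2)*e11 + (1/2)*hsym
  have hdet : C.det = C 0 0 * C 1 1 - C 0 1 * C 1 0 := Matrix.det_fin_two C
  rw [← hsym] at hdet
  rw [hdet, e01', e00, e11]
  constructor
  · ring
  · nlinarith [sq_nonneg (b11*b12 + g22*(a11 - a22 - b12))]
end

section
/- Let a10, a20, a11, a12, a21, a22 be nonnegative real numbers with a10 > 0, a20 > 0 satisfying a21 = a11, a22 = a12, and a20 − a10 = a11 − a22 ≥ 0. Then there exists ε > 0 such that for all u ∈ D and all z = (z1,z2) ∈ ℝ², zᵀH(u)A_SKT(u)z ≥ ε(z1²/u1 + z2²/u2), where A_SKT(u) = [[a10 + 2a11 u1 + a12 u2, a12 u1],[a21 u2, a20 + a21 u1 + 2a22 u2]] is the Shigesada–Kawasaki–Teramoto diffusion matrix. -/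
open Matrix

/-- The Shigesada–Kawasaki–Teramoto diffusion matrix. -/
noncomputable def Askt (c10 c20 c11 c12 c21 c22 u1 u2 : ℝ) : Matrix (Fin 2) (Fin 2) ℝ :=
  !![c10 + 2*c11*u1 + c12*u2, c12*u1; c21*u2, c20 + c21*u1 + 2*c22*u2]

set_option maxHeartbeats 800000 in
/-- Scalar identity underlying the entropy estimate. -/
lemma skt_scalar_id (c10 c20 c21 c22 u1 u2 z0 z1 : ℝ)
    (hc20 : c20 = c10 + (c21 - c22))
    (h1 : u1 ≠ 0) (h2 : u2 ≠ 0) (h3 : (1-u1-u2) ≠ 0) :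
    z0 * (((u1⁻¹ + (1 - u1 - u2)⁻¹) * (c10 + 2 * c21 * u1 + c22 * u2) +
            (1 - u1 - u2)⁻¹ * (c21 * u2)) * z0 +
          ((u1⁻¹ + (1 - u1 - u2)⁻¹) * (c22 * u1) +
            (1 - u1 - u2)⁻¹ * (c20 + c21 * u1 + 2 * c22 * u2)) * z1) +
      z1 * (((1 - u1 - u2)⁻¹ * (c10 + 2 * c21 * u1 + c22 * u2) +
            (u2⁻¹ + (1 - u1 - u2)⁻¹) * (c21 * u2)) * z0 +
          ((1 - u1 - u2)⁻¹ * (c22 * u1) +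
            (u2⁻¹ + (1 - u1 - u2)⁻¹) * (c20 + c21 * u1 + 2 * c22 * u2)) * z1) =
      c10 * (z0^2 / u1 + z1^2 / u2)
      + c10 * (z0 + z1)^2 / (1-u1-u2)
      + (c21 - c22) * ((2*u1+u2)*(z0 + z1)^2/(1-u1-u2) + (z0 + z1)^2 + z0^2
          + z1^2/u2 + u1*z1^2/u2)
      + c22 * (2*(u1+u2)*(z0 + z1)^2/(1-u1-u2) + (z0 + z1)^2 + z0^2 + z1^2
          + u2*z0^2/u1 + u1*z1^2/u2) := by
  subst hc20
  field_simp
  ring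

/-- Under the stated conditions on the SKT coefficients, there is `ε > 0` with
`zᵀH(u)A_SKT(u)z ≥ ε(z₁²/u₁ + z₂²/u₂)` for all `u ∈ D` and `z ∈ ℝ²`. -/
theorem stmt7 (c10 c20 c11 c12 c21 c22 : ℝ)
    (h10 : 0 < c10) (h20 : 0 < c20) (h11 : 0 ≤ c11) (h12 : 0 ≤ c12)
    (h21 : 0 ≤ c21) (h22 : 0 ≤ c22)
    (e1 : c21 = c11) (e2 : c22 = c12) (e3 : c20 - c10 = c11 - c22) (e4 : 0 ≤ c11 - c22) :
    ∃ ε > (0:ℝ), ∀ u1 u2 : ℝ, 0 < u1 → 0 < u2 → u1 + u2 < 1 → ∀ z : Fin 2 → ℝ,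
      ε * ((z 0)^2 / u1 + (z 1)^2 / u2) ≤
        z ⬝ᵥ ((Hmat u1 u2 * Askt c10 c20 c11 c12 c21 c22 u1 u2).mulVec z) := by
  subst e1; subst e2
  have hd : 0 ≤ c21 - c22 := e4
  have hc20 : c20 = c10 + (c21 - c22) := by linarith
  refine ⟨c10, h10, ?_⟩
  intro u1 u2 h1 h2 hlt z
  have h3 : (0:ℝ) < 1 - u1 - u2 := by linarith
  have hval : z ⬝ᵥ ((Hmat u1 u2 * Askt c10 c20 c21 c22 c21 c22 u1 u2).mulVec z) =
      c10 * ((z 0)^2 / u1 + (z 1)^2 / u2)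
      + c10 * (z 0 + z 1)^2 / (1-u1-u2)
      + (c21 - c22) * ((2*u1+u2)*(z 0 + z 1)^2/(1-u1-u2) + (z 0 + z 1)^2 + (z 0)^2
          + (z 1)^2/u2 + u1*(z 1)^2/u2)
      + c22 * (2*(u1+u2)*(z 0 + z 1)^2/(1-u1-u2) + (z 0 + z 1)^2 + (z 0)^2 + (z 1)^2
          + u2*(z 0)^2/u1 + u1*(z 1)^2/u2) := by
    simp [Hmat, Askt, Matrix.mul_apply, mulVec, dotProduct, Fin.sum_univ_two]
    linear_combination skt_scalar_id c10 c20 c21 c22 u1 u2 (z 0) (z 1) hc20 h1.ne' h2.ne' h3.ne'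
  rw [hval]
  have t1 : 0 ≤ c10 * (z 0 + z 1)^2 / (1-u1-u2) := div_nonneg (by positivity) h3.le
  have t2 : 0 ≤ (2*u1+u2)*(z 0 + z 1)^2/(1-u1-u2) + (z 0 + z 1)^2 + (z 0)^2
      + (z 1)^2/u2 + u1*(z 1)^2/u2 := by
    have a1 : 0 ≤ (2*u1+u2)*(z 0 + z 1)^2/(1-u1-u2) :=
      div_nonneg (mul_nonneg (by linarith) (sq_nonneg _)) h3.le
    have a2 : 0 ≤ (z 1)^2/u2 := div_nonneg (sq_nonneg _) h2.le
    have a3 : 0 ≤ u1*(z 1)^2/u2 := div_nonneg (mul_nonneg h1.le (sq_nonneg _)) h2.le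
    linarith [sq_nonneg (z 0 + z 1), sq_nonneg (z 0)]
  have t3 : 0 ≤ 2*(u1+u2)*(z 0 + z 1)^2/(1-u1-u2) + (z 0 + z 1)^2 + (z 0)^2 + (z 1)^2
      + u2*(z 0)^2/u1 + u1*(z 1)^2/u2 := by
    have a1 : 0 ≤ 2*(u1+u2)*(z 0 + z 1)^2/(1-u1-u2) :=
      div_nonneg (mul_nonneg (by linarith) (sq_nonneg _)) h3.le
    have a2 : 0 ≤ u2*(z 0)^2/u1 := div_nonneg (mul_nonneg h2.le (sq_nonneg _)) h1.le
    have a3 : 0 ≤ u1*(z 1)^2/u2 := div_nonneg (mul_nonneg h1.le (sq_nonneg _)) h2.le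
    linarith [sq_nonneg (z 0 + z 1), sq_nonneg (z 0), sq_nonneg (z 1)]
  linarith [mul_nonneg hd t2, mul_nonneg h12 t3]
end

section
/- Let U = (U1, U2) ∈ D, set U3 = 1 − U1 − U2, let b10, b20 ≥ 0, and assume b_{i0} = b_{i1}U1 + b_{i2}U2 with b10 = b12, b20 = b21 and b11, b22 given so that f_i(u) = (b_{i0} − b_{i1}u1 − b_{i2}u2)u_i. Then for every u ∈ D, with u3 = 1 − u1 − u2: (i) f_i(u) = −b_{i0} u_i U3 (u_i/U_i − u3/U3) for i = 1,2; and (ii) Σ_{i=1,2} f_i(u)·(log(u_i/U_i) − log(u3/U3)) = −Σ_{i=1,2} b_{i0} u_i U3 (u_i/U_i − u3/U3)(log(u_i/U_i) − log(u3/U3)) ≤ 0. -/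
open Real

lemma log_diff_nonneg (a b : ℝ) (ha : 0 < a) (hb : 0 < b) :
    0 ≤ (a - b) * (log a - log b) := by
  rcases le_total a b with h | h
  · have := Real.log_le_log ha h
    nlinarith
  · have := Real.log_le_log hb h
    nlinarith

/-- Rewriting of the Lotka–Volterra source terms around the steady state `U ∈ D` under
`b_{i0} = b_{i1}U₁ + b_{i2}U₂`, `b10 = b12`, `b20 = b21`, and nonpositivity of
`Σᵢ fᵢ(u) ∂ᵤᵢ h(u|U)`. -/
theorem stmt10 (U1 U2 b10 b11 b12 b20 b21 b22 : ℝ)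
    (hU1 : 0 < U1) (hU2 : 0 < U2) (hU : U1 + U2 < 1)
    (hb10 : 0 ≤ b10) (hb20 : 0 ≤ b20)
    (h1 : b10 = b11 * U1 + b12 * U2) (h2 : b20 = b21 * U1 + b22 * U2)
    (e1 : b10 = b12) (e2 : b20 = b21) :
    ∀ u1 u2 : ℝ, 0 < u1 → 0 < u2 → u1 + u2 < 1 →
      ((b10 - b11*u1 - b12*u2) * u1 =
        -b10 * u1 * (1 - U1 - U2) * (u1/U1 - (1-u1-u2)/(1-U1-U2))) ∧
      ((b20 - b21*u1 - b22*u2) * u2 =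
        -b20 * u2 * (1 - U1 - U2) * (u2/U2 - (1-u1-u2)/(1-U1-U2))) ∧
      ((b10 - b11*u1 - b12*u2) * u1 * (log (u1/U1) - log ((1-u1-u2)/(1-U1-U2)))
        + (b20 - b21*u1 - b22*u2) * u2 * (log (u2/U2) - log ((1-u1-u2)/(1-U1-U2)))
       = -(b10 * u1 * (1 - U1 - U2) * (u1/U1 - (1-u1-u2)/(1-U1-U2))
             * (log (u1/U1) - log ((1-u1-u2)/(1-U1-U2)))
           + b20 * u2 * (1 - U1 - U2) * (u2/U2 - (1-u1-u2)/(1-U1-U2))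
             * (log (u2/U2) - log ((1-u1-u2)/(1-U1-U2))))) ∧
      ((b10 - b11*u1 - b12*u2) * u1 * (log (u1/U1) - log ((1-u1-u2)/(1-U1-U2)))
        + (b20 - b21*u1 - b22*u2) * u2 * (log (u2/U2) - log ((1-u1-u2)/(1-U1-U2)))
       ≤ 0) := by
  intro u1 u2 hu1 hu2 hu
  have hU3 : (0:ℝ) < 1 - U1 - U2 := by linarith
  have hu3 : (0:ℝ) < 1 - u1 - u2 := by linarith
  have hU1' : U1 ≠ 0 := ne_of_gt hU1
  have hU2' : U2 ≠ 0 := ne_of_gt hU2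
  have hU3' : (1 - U1 - U2) ≠ 0 := ne_of_gt hU3
  have hb11 : b11 = b10 * (1 - U2) / U1 := by
    field_simp
    linear_combination -h1 + U2 * e1
  have hb22 : b22 = b20 * (1 - U1) / U2 := by
    field_simp
    linear_combination -h2 + U1 * e2
  have key1 : (b10 - b11*u1 - b12*u2) * u1 =
      -b10 * u1 * (1 - U1 - U2) * (u1/U1 - (1-u1-u2)/(1-U1-U2)) := by
    rw [hb11, ← e1]
    field_simp
    ring
  have key2 : (b20 - b21*u1 - b22*u2) * u2 =
      -b20 * u2 * (1 - U1 - U2) * (u2/U2 - (1-u1-u2)/(1-U1-U2)) := by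
    rw [hb22, ← e2]
    field_simp
    ring
  refine ⟨key1, key2, ?_, ?_⟩
  · rw [key1, key2]; ring
  · rw [key1, key2]
    have p1 : 0 ≤ (u1/U1 - (1-u1-u2)/(1-U1-U2)) *
        (log (u1/U1) - log ((1-u1-u2)/(1-U1-U2))) :=
      log_diff_nonneg _ _ (div_pos hu1 hU1) (div_pos hu3 hU3)
    have p2 : 0 ≤ (u2/U2 - (1-u1-u2)/(1-U1-U2)) *
        (log (u2/U2) - log ((1-u1-u2)/(1-U1-U2))) :=
      log_diff_nonneg _ _ (div_pos hu2 hU2) (div_pos hu3 hU3)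
    have c1 : 0 ≤ b10 * u1 * (1 - U1 - U2) := by positivity
    have c2 : 0 ≤ b20 * u2 * (1 - U1 - U2) := by positivity
    nlinarith [mul_nonneg c1 p1, mul_nonneg c2 p2]
end

section
/- Let α11, α22, β11, β12, γ22 be real numbers satisfying α11 > 0, α22 > 0, β12 < α11 + min{β11, γ22}, α11 + β11 ≥ 0, α22 + γ22 ≥ 0, let U = (U1,U2) ∈ D, and assume the discriminant conditions (α11+β11)(α11+β11−β12) − 4γ21²·(U2/U1) > 0 and (α22+γ22)(α22+γ22−γ21) − 4β12²·(U1/U2) > 0, where γ21 = α22 − α11 + β12. Then there exist ε0 > 0 and c > 0 such that for all 0 < ε < ε0, all u ∈ D, and all z = (z1,z2) ∈ ℝ², zᵀK_ε(u)A(u)z ≥ c(z1²/(u1+ε)² + z2²/(u2+ε)²), where K_ε(u) is the diagonal matrix with entries (K_ε(u))_{ii} = (U_i+ε)/(u_i+ε)². -/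
open Matrix

lemma aux_quad (a b m c x y : ℝ) (ha : c ≤ a) (hb : c ≤ b)
    (hm : m^2 ≤ 4*(a-c)*(b-c)) : c*(x^2+y^2) ≤ a*x^2 + m*x*y + b*y^2 := by
  rcases eq_or_lt_of_le ha with h | h
  · have hm0 : m = 0 := by nlinarith [sq_nonneg m]
    subst hm0
    nlinarith [mul_nonneg (sub_nonneg.2 hb) (sq_nonneg y)]
  · nlinarith [sq_nonneg (2*(a-c)*x + m*y), mul_nonneg (sub_nonneg.2 hb) (sq_nonneg y),
      mul_nonneg (sub_nonneg.2 ha) (sq_nonneg x), sq_nonneg y, h]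

set_option maxHeartbeats 1000000 in
lemma aux_key (V W β M1 M2 k1 k2 A B u ε : ℝ)
    (hV : 0 < V) (hW : 0 < W) (hu0 : 0 < u) (hu1 : u < 1) (hε : 0 < ε) (hε1 : ε ≤ 1)
    (hM1 : 0 < M1) (hM2 : 0 < M2) (hk1 : 0 ≤ k1) (hk2 : 0 ≤ k2)
    (hA : M1*(1-u) + k1*u ≤ A) (hB : M2*(1-u) + k2*u ≤ B)
    (hεs : ε*(16*(V+1)*β^2+1) ≤ min (k1*k2*W - 4*β^2*V) (W*(M1*M2)) / 2) :
    4*(V+ε)*β^2*(u+ε)^2 ≤ (W+ε)*(A*B) := by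
  have hu1' : (0:ℝ) ≤ 1 - u := by linarith
  have hmin : 0 < min (k1*k2*W - 4*β^2*V) (W*(M1*M2)) := by
    have h0 : 0 < ε*(16*(V+1)*β^2+1) := by positivity
    linarith
  have hL1 : 0 ≤ M1*(1-u)+k1*u := by
    have := mul_nonneg hk1 hu0.le
    have := mul_nonneg hM1.le hu1'
    linarith
  have hL2 : 0 ≤ M2*(1-u)+k2*u := by
    have := mul_nonneg hk2 hu0.le
    have := mul_nonneg hM2.le hu1'
    linarith
  have hAB : (M1*(1-u)+k1*u)*(M2*(1-u)+k2*u) ≤ A*B :=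
    mul_le_mul hA hB hL2 (le_trans hL1 hA)
  have hexp : (M1*M2)*(1-u)^2 + (k1*k2)*u^2 ≤ (M1*(1-u)+k1*u)*(M2*(1-u)+k2*u) := by
    nlinarith [mul_nonneg (mul_nonneg hM1.le hk2) (mul_nonneg hu0.le hu1'),
      mul_nonneg (mul_nonneg hM2.le hk1) (mul_nonneg hu0.le hu1')]
  have hhalf : min (k1*k2*W - 4*β^2*V) (W*(M1*M2)) / 2 ≤
      (k1*k2*W - 4*β^2*V)*u^2 + (W*(M1*M2))*(1-u)^2 := by
    nlinarith [mul_nonneg (sub_nonneg.2 (min_le_left (k1*k2*W - 4*β^2*V) (W*(M1*M2)))) (sq_nonneg u),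
      mul_nonneg (sub_nonneg.2 (min_le_right (k1*k2*W - 4*β^2*V) (W*(M1*M2)))) (sq_nonneg (1-u)),
      mul_nonneg hmin.le (sq_nonneg (2*u-1))]
  have hABnn : 0 ≤ A*B := le_trans (mul_nonneg hL1 hL2) hAB
  have hsq : (u+ε)^2 ≤ u^2 + 3*ε := by
    nlinarith [mul_nonneg hε.le hu1', mul_nonneg hε.le (by linarith : (0:ℝ) ≤ 1-ε)]
  calc 4*(V+ε)*β^2*(u+ε)^2 ≤ 4*(V+ε)*β^2*(u^2+3*ε) := by
        have h0 : (0:ℝ) ≤ 4*(V+ε)*β^2 := by positivity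
        exact mul_le_mul_of_nonneg_left hsq h0
    _ ≤ 4*V*β^2*u^2 + 16*(V+1)*β^2*ε := by
        nlinarith [mul_nonneg (mul_nonneg hε.le (sq_nonneg β)) (by nlinarith : (0:ℝ) ≤ 4 - u^2 - 3*ε),
          mul_nonneg (mul_nonneg hV.le (sq_nonneg β)) hε.le]
    _ ≤ (k1*k2*W - (k1*k2*W - 4*β^2*V))*u^2 + min (k1*k2*W - 4*β^2*V) (W*(M1*M2)) / 2 := by
        have h16 : 16*(V+1)*β^2*ε ≤ ε*(16*(V+1)*β^2+1) := by nlinarith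
        nlinarith [hεs]
    _ ≤ (k1*k2*W)*u^2 + (W*(M1*M2))*(1-u)^2 - (k1*k2*W - 4*β^2*V)*u^2 + (k1*k2*W - 4*β^2*V)*u^2 := by
        linarith
    _ = W*((M1*M2)*(1-u)^2 + (k1*k2)*u^2) := by ring
    _ ≤ W*(A*B) := mul_le_mul_of_nonneg_left (le_trans hexp hAB) hW.le
    _ ≤ (W+ε)*(A*B) := by nlinarith [mul_nonneg hε.le hABnn]

lemma aux_T1 (V W β w A B : ℝ) (hV : 0 ≤ V) (h : 4*V*β^2*w^2 ≤ W*(A*B)) :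
    4*(V*β*w)^2 ≤ (V*A)*(W*B) := by nlinarith [mul_le_mul_of_nonneg_left h hV]

lemma aux_disc (t1 t2 aa bb c : ℝ) (h1 : 4*t1^2 ≤ aa*bb) (h2 : 4*t2^2 ≤ aa*bb)
    (hc : 0 < c) (ha : 2*c ≤ aa) (hb : 2*c ≤ bb) :
    (t1+t2)^2 ≤ 4*(aa-c)*(bb-c) := by
  nlinarith [sq_nonneg (t1-t2),
    mul_nonneg (by linarith : (0:ℝ) ≤ aa-2*c) (by linarith : (0:ℝ) ≤ bb-2*c),
    mul_pos hc hc,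
    mul_nonneg hc.le (by linarith : (0:ℝ) ≤ aa-2*c),
    mul_nonneg hc.le (by linarith : (0:ℝ) ≤ bb-2*c)]

lemma aux_2c (U m A c ε : ℝ) (hU : 0 < U) (hε : 0 ≤ ε) (hm : 0 < m) (hA : m ≤ A)
    (hc : 2*c ≤ U*m) : 2*c ≤ (U+ε)*A := by
  nlinarith [mul_le_mul_of_nonneg_left hA hU.le, mul_nonneg hε (hm.le.trans hA)]

lemma aux_sqle (t s : ℝ) (h1 : t ≤ 1) (h0 : 0 ≤ t) : (s*t)^2 ≤ s^2 := by
  nlinarith [sq_nonneg s, mul_nonneg h0 (sq_nonneg s)]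

set_option maxHeartbeats 2000000 in
/-- Under the parameter and discriminant conditions, there exist `ε₀ > 0` and `c > 0`
such that for all `0 < ε < ε₀`, `u ∈ D`, `z ∈ ℝ²`,
`zᵀK_ε(u)A(u)z ≥ c(z₁²/(u₁+ε)² + z₂²/(u₂+ε)²)`. -/
theorem stmt11 (a11 a22 b11 b12 g22 U1 U2 : ℝ)
    (h1 : 0 < a11) (h2 : 0 < a22) (h3 : b12 < a11 + min b11 g22)
    (h4 : 0 ≤ a11 + b11) (h5 : 0 ≤ a22 + g22)
    (hU1 : 0 < U1) (hU2 : 0 < U2) (hU : U1 + U2 < 1)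
    (hd1 : 0 < (a11+b11)*(a11+b11-b12) - 4*(a22-a11+b12)^2*(U2/U1))
    (hd2 : 0 < (a22+g22)*(a22+g22-(a22-a11+b12)) - 4*b12^2*(U1/U2)) :
    ∃ ε0 > (0:ℝ), ∃ c > (0:ℝ), ∀ ε : ℝ, 0 < ε → ε < ε0 →
      ∀ u1 u2 : ℝ, 0 < u1 → 0 < u2 → u1 + u2 < 1 → ∀ z : Fin 2 → ℝ,
        c * ((z 0)^2/(u1+ε)^2 + (z 1)^2/(u2+ε)^2) ≤
          z ⬝ᵥ ((!![(U1+ε)/(u1+ε)^2, 0; 0, (U2+ε)/(u2+ε)^2]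
            * Amat a11 a22 b11 b12 g22 u1 u2).mulVec z) := by
  have hb11m : min b11 g22 ≤ b11 := min_le_left _ _
  have hg22m : min b11 g22 ≤ g22 := min_le_right _ _
  have habb : 0 < a11 + b11 - b12 := by linarith
  have hagg : 0 < a11 + g22 - b12 := by linarith
  have hagg2 : 0 < a22 + g22 - (a22-a11+b12) := by linarith
  have hUU2 : (U2/U1)*U1 = U2 := div_mul_cancel₀ _ (ne_of_gt hU1)
  have hUU1 : (U1/U2)*U2 = U1 := div_mul_cancel₀ _ (ne_of_gt hU2)
  have hs1 : 0 < (a11+b11-b12)*(a11+b11)*U1 - 4*(a22-a11+b12)^2*U2 := by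
    nlinarith [mul_pos hd1 hU1]
  have hs2 : 0 < (a22+g22-(a22-a11+b12))*(a22+g22)*U2 - 4*b12^2*U1 := by
    nlinarith [mul_pos hd2 hU2]
  have hab : 0 < a11 + b11 := by
    rcases lt_or_ge 0 (a11+b11) with h | h
    · exact h
    · exfalso
      nlinarith [mul_pos habb hU1, mul_nonneg (sq_nonneg (a22-a11+b12)) hU2.le]
  have hag : 0 < a22 + g22 := by
    rcases lt_or_ge 0 (a22+g22) with h | h
    · exact h
    · exfalso
      nlinarith [mul_pos hagg2 hU2, mul_nonneg (sq_nonneg b12) hU1.le]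
  set m1 := min a11 (min (a11+b11) (a11+g22-b12)) with hm1def
  set m2 := min a22 (min (a11+b11-b12) (a22+g22)) with hm2def
  have hm1 : 0 < m1 := lt_min h1 (lt_min hab hagg)
  have hm2 : 0 < m2 := lt_min h2 (lt_min habb hag)
  have hm1a : m1 ≤ a11 := min_le_left _ _
  have hm1b : m1 ≤ a11+b11 := le_trans (min_le_right _ _) (min_le_left _ _)
  have hm1c : m1 ≤ a11+g22-b12 := le_trans (min_le_right _ _) (min_le_right _ _)
  have hm2a : m2 ≤ a22 := min_le_left _ _
  have hm2b : m2 ≤ a11+b11-b12 := le_trans (min_le_right _ _) (min_le_left _ _)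
  have hm2c : m2 ≤ a22+g22 := le_trans (min_le_right _ _) (min_le_right _ _)
  have hC1 : (0:ℝ) < 16*(U2+1)*(a22-a11+b12)^2+1 := by positivity
  have hC2 : (0:ℝ) < 16*(U1+1)*b12^2+1 := by positivity
  have hR1 : (0:ℝ) < min ((a11+b11-b12)*(a11+b11)*U1 - 4*(a22-a11+b12)^2*U2) (U1*(m2*m1)) / 2 :=
    div_pos (lt_min hs1 (mul_pos hU1 (mul_pos hm2 hm1))) two_pos
  have hR2 : (0:ℝ) < min ((a22+g22-(a22-a11+b12))*(a22+g22)*U2 - 4*b12^2*U1) (U2*(m1*m2)) / 2 :=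
    div_pos (lt_min hs2 (mul_pos hU2 (mul_pos hm1 hm2))) two_pos
  refine ⟨min 1 (min
      ((min ((a11+b11-b12)*(a11+b11)*U1 - 4*(a22-a11+b12)^2*U2) (U1*(m2*m1)) / 2) / (16*(U2+1)*(a22-a11+b12)^2+1))
      ((min ((a22+g22-(a22-a11+b12))*(a22+g22)*U2 - 4*b12^2*U1) (U2*(m1*m2)) / 2) / (16*(U1+1)*b12^2+1))),
    lt_min one_pos (lt_min (div_pos hR1 hC1) (div_pos hR2 hC2)),
    min (U1*m1) (U2*m2) / 2,
    div_pos (lt_min (mul_pos hU1 hm1) (mul_pos hU2 hm2)) two_pos, ?_⟩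
  intro ε hε hεE0 u1 u2 hu1 hu2 hu12 z
  have hε1 : ε ≤ 1 := le_trans hεE0.le (min_le_left _ _)
  have hεR1 : ε*(16*(U2+1)*(a22-a11+b12)^2+1) ≤
      min ((a11+b11-b12)*(a11+b11)*U1 - 4*(a22-a11+b12)^2*U2) (U1*(m2*m1)) / 2 := by
    have h := le_trans hεE0.le (le_trans (min_le_right _ _) (min_le_left _ _))
    have h2 := mul_le_mul_of_nonneg_right h hC1.le
    rwa [div_mul_cancel₀ _ (ne_of_gt hC1)] at h2
  have hεR2 : ε*(16*(U1+1)*b12^2+1) ≤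
      min ((a22+g22-(a22-a11+b12))*(a22+g22)*U2 - 4*b12^2*U1) (U2*(m1*m2)) / 2 := by
    have h := le_trans hεE0.le (le_trans (min_le_right _ _) (min_le_right _ _))
    have h2 := mul_le_mul_of_nonneg_right h hC2.le
    rwa [div_mul_cancel₀ _ (ne_of_gt hC2)] at h2
  have hq1 : 0 < u1 + ε := by linarith
  have hq2 : 0 < u2 + ε := by linarith
  have hu1' : (0:ℝ) ≤ 1 - u1 - u2 := by linarith
  -- convert the goal to scalar form
  rw [show z ⬝ᵥ ((!![(U1+ε)/(u1+ε)^2, 0; 0, (U2+ε)/(u2+ε)^2]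
            * Amat a11 a22 b11 b12 g22 u1 u2).mulVec z) =
      ((U1+ε)*(a11+b11*u1+(g22-b12)*u2))*(z 0/(u1+ε))^2
      + ((U1+ε)*b12*u1*(u2+ε)/(u1+ε) + (U2+ε)*(a22-a11+b12)*u2*(u1+ε)/(u2+ε))
        *(z 0/(u1+ε))*(z 1/(u2+ε))
      + ((U2+ε)*(a22+(b11-(a22-a11+b12))*u1+g22*u2))*(z 1/(u2+ε))^2 from by
    simp [Amat, Matrix.mul_fin_two, Matrix.mulVec, dotProduct, Fin.sum_univ_two]
    field_simp
    ring]
  rw [show (z 0)^2/(u1+ε)^2 = (z 0/(u1+ε))^2 from (div_pow _ _ _).symm,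
      show (z 1)^2/(u2+ε)^2 = (z 1/(u2+ε))^2 from (div_pow _ _ _).symm]
  -- coefficient lower bounds
  have hA1u1 : m1*(1-u1) + (a11+b11)*u1 ≤ a11 + b11*u1 + (g22-b12)*u2 := by
    have e1 := mul_nonneg (sub_nonneg.2 hm1a) hu1'
    have e2 := mul_nonneg (sub_nonneg.2 hm1c) hu2.le
    linarith
  have hA1u2 : m1*(1-u2) + (a22+g22-(a22-a11+b12))*u2 ≤ a11 + b11*u1 + (g22-b12)*u2 := by
    have e1 := mul_nonneg (sub_nonneg.2 hm1a) hu1'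
    have e2 := mul_nonneg (sub_nonneg.2 hm1b) hu1.le
    linarith
  have hA2u1 : m2*(1-u1) + (a11+b11-b12)*u1 ≤ a22 + (b11-(a22-a11+b12))*u1 + g22*u2 := by
    have e1 := mul_nonneg (sub_nonneg.2 hm2a) hu1'
    have e2 := mul_nonneg (sub_nonneg.2 hm2c) hu2.le
    linarith
  have hA2u2 : m2*(1-u2) + (a22+g22)*u2 ≤ a22 + (b11-(a22-a11+b12))*u1 + g22*u2 := by
    have e1 := mul_nonneg (sub_nonneg.2 hm2a) hu1'
    have e2 := mul_nonneg (sub_nonneg.2 hm2b) hu1.le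
    linarith
  have hA1m : m1 ≤ a11+b11*u1+(g22-b12)*u2 := by
    have e1 := mul_nonneg (sub_nonneg.2 hm1b) hu1.le
    linarith [hA1u1]
  have hA2m : m2 ≤ a22+(b11-(a22-a11+b12))*u1+g22*u2 := by
    have e1 := mul_nonneg (sub_nonneg.2 hm2b) hu1.le
    linarith [hA2u1]
  have hkeyA := aux_key U1 U2 b12 m1 m2 (a22+g22-(a22-a11+b12)) (a22+g22)
      (a11+b11*u1+(g22-b12)*u2) (a22+(b11-(a22-a11+b12))*u1+g22*u2) u2 ε
      hU1 hU2 hu2 (by linarith) hε hε1 hm1 hm2 hagg2.le hag.le hA1u2 hA2u2 hεR2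
  have hkeyB := aux_key U2 U1 (a22-a11+b12) m2 m1 (a11+b11-b12) (a11+b11)
      (a22+(b11-(a22-a11+b12))*u1+g22*u2) (a11+b11*u1+(g22-b12)*u2) u1 ε
      hU2 hU1 hu1 (by linarith) hε hε1 hm2 hm1 habb.le hab.le hA2u1 hA1u1 hεR1
  have h4T1sq := aux_T1 (U1+ε) (U2+ε) b12 (u2+ε)
      (a11+b11*u1+(g22-b12)*u2) (a22+(b11-(a22-a11+b12))*u1+g22*u2) (by positivity) hkeyA
  have h4T2sq := aux_T1 (U2+ε) (U1+ε) (a22-a11+b12) (u1+ε)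
      (a22+(b11-(a22-a11+b12))*u1+g22*u2) (a11+b11*u1+(g22-b12)*u2) (by positivity) hkeyB
  clear hkeyA hkeyB hεR1 hεR2 hεE0
  -- bound the actual cross terms by the simplified ones
  have hT1 : ((U1+ε)*b12*u1*(u2+ε)/(u1+ε))^2 ≤ ((U1+ε)*b12*(u2+ε))^2 := by
    have e1 : (U1+ε)*b12*u1*(u2+ε)/(u1+ε) = ((U1+ε)*b12*(u2+ε))*(u1/(u1+ε)) := by
      field_simp
    rw [e1]
    exact aux_sqle _ _ (by rw [div_le_one hq1]; linarith) (by positivity)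
  have hT2 : ((U2+ε)*(a22-a11+b12)*u2*(u1+ε)/(u2+ε))^2 ≤ ((U2+ε)*(a22-a11+b12)*(u1+ε))^2 := by
    have e1 : (U2+ε)*(a22-a11+b12)*u2*(u1+ε)/(u2+ε)
        = ((U2+ε)*(a22-a11+b12)*(u1+ε))*(u2/(u2+ε)) := by
      field_simp
    rw [e1]
    exact aux_sqle _ _ (by rw [div_le_one hq2]; linarith) (by positivity)
  have h4T1 : 4*((U1+ε)*b12*u1*(u2+ε)/(u1+ε))^2 ≤
      ((U1+ε)*(a11+b11*u1+(g22-b12)*u2))*((U2+ε)*(a22+(b11-(a22-a11+b12))*u1+g22*u2)) := by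
    linarith [h4T1sq, hT1]
  have h4T2 : 4*((U2+ε)*(a22-a11+b12)*u2*(u1+ε)/(u2+ε))^2 ≤
      ((U1+ε)*(a11+b11*u1+(g22-b12)*u2))*((U2+ε)*(a22+(b11-(a22-a11+b12))*u1+g22*u2)) := by
    linarith [h4T2sq, hT2]
  clear h4T1sq h4T2sq hT1 hT2
  have h2ca : 2*(min (U1*m1) (U2*m2)/2) ≤ (U1+ε)*(a11+b11*u1+(g22-b12)*u2) := by
    have h := min_le_left (U1*m1) (U2*m2)
    exact aux_2c U1 m1 _ _ ε hU1 hε.le hm1 hA1m (by linarith)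
  have h2cb : 2*(min (U1*m1) (U2*m2)/2) ≤ (U2+ε)*(a22+(b11-(a22-a11+b12))*u1+g22*u2) := by
    have h := min_le_right (U1*m1) (U2*m2)
    exact aux_2c U2 m2 _ _ ε hU2 hε.le hm2 hA2m (by linarith)
  have hccpos : 0 < min (U1*m1) (U2*m2)/2 :=
    div_pos (lt_min (mul_pos hU1 hm1) (mul_pos hU2 hm2)) two_pos
  exact aux_quad _ _ _ _ _ _ (by linarith) (by linarith)
    (aux_disc _ _ _ _ _ h4T1 h4T2 hccpos h2ca h2cb)
end

section
/- Fix ū = (ū1, ū2) ∈ D and define the relative entropy density h(u|ū) = Σ_{k=1}^3 ū_k((u_k/ū_k)log(u_k/ū_k) − u_k/ū_k + 1) for u ∈ D, where u3 = 1−u1−u2, ū3 = 1−ū1−ū2 (so ∂h/∂u_i (u|ū) = log(u_i/ū_i) − log(u3/ū_3)). Let g_1, g_2 be continuous real-valued functions on the closed triangle {u1 ≥ 0, u2 ≥ 0, u1+u2 ≤ 1}, and suppose there is ε > 0 such that g_i(u) ≤ 0 for i = 1,2 whenever 1 − ε < u1 + u2 ≤ 1. Set f_i(u) = u_i g_i(u).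 Then there exists a constant c > 0 such that Σ_{i=1,2} f_i(u)·(log(u_i/ū_i) − log(u3/ū_3)) ≤ c for every u ∈ D. -/
open Real

private lemma aux_xlogx (x : ℝ) (hx : 0 < x) (hx1 : x ≤ 1) : |x * Real.log x| ≤ 1 := by
  have h1 : x * Real.log x ≤ 0 :=
    mul_nonpos_of_nonneg_of_nonpos hx.le (Real.log_nonpos hx.le hx1)
  have h2 : Real.log (1/x) ≤ 1/x - 1 := Real.log_le_sub_one_of_pos (by positivity)
  rw [Real.log_div one_ne_zero hx.ne', Real.log_one] at h2
  have h3 : -1 ≤ x * Real.log x := by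
    have h4 : x * (1/x - 1) = 1 - x := by field_simp
    nlinarith [mul_le_mul_of_nonneg_left h2 hx.le]
  rw [abs_le]; constructor <;> linarith

private lemma aux_abs_mul_log_div (x a : ℝ) (hx : 0 < x) (hx1 : x ≤ 1) (ha : 0 < a) :
    |x * Real.log (x/a)| ≤ 1 + |Real.log a| := by
  rw [Real.log_div hx.ne' ha.ne']
  have h1 : |x * Real.log x| ≤ 1 := aux_xlogx x hx hx1
  have h2 : |x * Real.log a| ≤ |Real.log a| := by
    rw [abs_mul, abs_of_nonneg hx.le]
    nlinarith [abs_nonneg (Real.log a)]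
  calc |x * (Real.log x - Real.log a)| = |x * Real.log x - x * Real.log a| := by ring_nf
    _ ≤ |x * Real.log x| + |x * Real.log a| := abs_sub _ _
    _ ≤ 1 + |Real.log a| := add_le_add h1 h2

private lemma aux_term_bound (g u L1 L3 M A B : ℝ) (hM : |g| ≤ M) (hu : 0 ≤ u) (hu1 : u ≤ 1)
    (hA : |u * L1| ≤ A) (hB : |L3| ≤ B) :
    u * g * (L1 - L3) ≤ M * A + M * B := by
  have hM0 : 0 ≤ M := (abs_nonneg g).trans hM
  have h2 : |g * (u * L1)| ≤ M * A := by
    rw [abs_mul]; exact mul_le_mul hM hA (abs_nonneg _) hM0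
  have h3 : |g * (u * L3)| ≤ M * B := by
    rw [abs_mul, abs_mul]
    have hu' : |u| * |L3| ≤ 1 * B :=
      mul_le_mul (by rwa [abs_of_nonneg hu]) hB (abs_nonneg _) one_pos.le
    calc |g| * (|u| * |L3|) ≤ M * (1 * B) :=
          mul_le_mul hM hu' (by positivity) hM0
      _ = M * B := by ring
  have e : u * g * (L1 - L3) = g * (u * L1) - g * (u * L3) := by ring
  calc u * g * (L1 - L3) = g * (u * L1) - g * (u * L3) := e
    _ ≤ |g * (u * L1)| + |g * (u * L3)| := by
        have := le_abs_self (g * (u * L1)); have := neg_abs_le (g * (u * L3)); linarith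
    _ ≤ M * A + M * B := add_le_add h2 h3

private lemma aux_term_bound2 (g u L1 L3 M A : ℝ) (hM : |g| ≤ M) (hg : g ≤ 0) (hu : 0 ≤ u)
    (hL3 : L3 ≤ 0) (hA : |u * L1| ≤ A) : u * g * (L1 - L3) ≤ M * A := by
  have hM0 : 0 ≤ M := (abs_nonneg g).trans hM
  have h2 : g * (u * L1) ≤ M * A := by
    calc g * (u * L1) ≤ |g * (u * L1)| := le_abs_self _
      _ = |g| * |u * L1| := abs_mul _ _
      _ ≤ M * A := mul_le_mul hM hA (abs_nonneg _) hM0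
  have hug : u * g ≤ 0 := mul_nonpos_of_nonneg_of_nonpos hu hg
  have h3 : 0 ≤ u * g * L3 := by nlinarith [mul_nonneg (neg_nonneg.mpr hug) (neg_nonneg.mpr hL3)]
  nlinarith

/-- If `g₁, g₂` are continuous on the closed triangle and nonpositive near `u₁+u₂ = 1`,
then `Σᵢ uᵢgᵢ(u) ∂ᵤᵢ h(u|ū)` is bounded above on `D`. -/
theorem stmt12 (ub1 ub2 : ℝ) (hub1 : 0 < ub1) (hub2 : 0 < ub2) (hub : ub1 + ub2 < 1)
    (g1 g2 : ℝ × ℝ → ℝ)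
    (hg1 : ContinuousOn g1 {p : ℝ × ℝ | 0 ≤ p.1 ∧ 0 ≤ p.2 ∧ p.1 + p.2 ≤ 1})
    (hg2 : ContinuousOn g2 {p : ℝ × ℝ | 0 ≤ p.1 ∧ 0 ≤ p.2 ∧ p.1 + p.2 ≤ 1})
    (ε : ℝ) (hε : 0 < ε)
    (hneg : ∀ p : ℝ × ℝ, 0 ≤ p.1 → 0 ≤ p.2 → 1 - ε < p.1 + p.2 → p.1 + p.2 ≤ 1 →
      g1 p ≤ 0 ∧ g2 p ≤ 0) :
    ∃ c > (0:ℝ), ∀ u1 u2 : ℝ, 0 < u1 → 0 < u2 → u1 + u2 < 1 →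
      u1 * g1 (u1, u2) * (log (u1/ub1) - log ((1-u1-u2)/(1-ub1-ub2)))
        + u2 * g2 (u1, u2) * (log (u2/ub2) - log ((1-u1-u2)/(1-ub1-ub2))) ≤ c := by
  set K : Set (ℝ × ℝ) := {p : ℝ × ℝ | 0 ≤ p.1 ∧ 0 ≤ p.2 ∧ p.1 + p.2 ≤ 1} with hKdef
  have hub3 : 0 < 1 - ub1 - ub2 := by linarith
  set ub3 : ℝ := 1 - ub1 - ub2 with hub3def
  -- K is compact
  have hKclosed : IsClosed K := by
    have : K = {p : ℝ × ℝ | 0 ≤ p.1} ∩ ({p | 0 ≤ p.2} ∩ {p | p.1 + p.2 ≤ 1}) := rfl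
    rw [this]
    exact (isClosed_le continuous_const continuous_fst).inter
      ((isClosed_le continuous_const continuous_snd).inter
        (isClosed_le (continuous_fst.add continuous_snd) continuous_const))
  have hKcomp : IsCompact K := by
    apply IsCompact.of_isClosed_subset
      (isCompact_Icc.prod isCompact_Icc : IsCompact (Set.Icc (0:ℝ) 1 ×ˢ Set.Icc (0:ℝ) 1))
      hKclosed
    rintro ⟨x, y⟩ ⟨hx, hy, hxy⟩
    exact ⟨⟨hx, by linarith⟩, hy, by linarith⟩
  obtain ⟨M1, hM1⟩ := hKcomp.exists_bound_of_continuousOn hg1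
  obtain ⟨M2, hM2⟩ := hKcomp.exists_bound_of_continuousOn hg2
  set M : ℝ := max 1 (max M1 M2) with hMdef
  have hM1' : ∀ p ∈ K, |g1 p| ≤ M := by
    intro p hp
    have := hM1 p hp
    rw [Real.norm_eq_abs] at this
    exact this.trans ((le_max_left M1 M2).trans (le_max_right _ _))
  have hM2' : ∀ p ∈ K, |g2 p| ≤ M := by
    intro p hp
    have := hM2 p hp
    rw [Real.norm_eq_abs] at this
    exact this.trans ((le_max_right M1 M2).trans (le_max_right _ _))
  have hMpos : (1:ℝ) ≤ M := le_max_left _ _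
  set δ : ℝ := min ε ub3 / 2 with hδdef
  have hδ0 : 0 < δ := by
    have : 0 < min ε ub3 := lt_min hε hub3
    positivity
  have hδε : δ ≤ ε := by
    have := min_le_left ε ub3; simp only [hδdef]; linarith
  have hδ3 : δ ≤ ub3 := by
    have := min_le_right ε ub3; simp only [hδdef]; linarith
  have hδ1 : δ < 1 := by
    have h3 : ub3 < 1 := by simp only [hub3def]; linarith
    linarith [hδ3]
  have hlogδ : Real.log δ ≤ 0 := Real.log_nonpos hδ0.le hδ1.le
  set A1 : ℝ := 1 + |Real.log ub1| with hA1def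
  set A2 : ℝ := 1 + |Real.log ub2| with hA2def
  set B : ℝ := -Real.log δ + |Real.log ub3| with hBdef
  have hBnn : 0 ≤ B := by
    have := abs_nonneg (Real.log ub3); simp only [hBdef]; linarith
  have hA1nn : 0 ≤ A1 := by have := abs_nonneg (Real.log ub1); simp only [hA1def]; linarith
  have hA2nn : 0 ≤ A2 := by have := abs_nonneg (Real.log ub2); simp only [hA2def]; linarith
  clear_value M δ A1 A2 B
  refine ⟨M * A1 + M * A2 + 2 * (M * B) + 1, by nlinarith, ?_⟩
  intro u1 u2 h1 h2 h12
  have hu3 : 0 < 1 - u1 - u2 := by linarith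
  set u3 : ℝ := 1 - u1 - u2 with hu3def
  have hu3lt : u3 < 1 := by simp only [hu3def]; linarith
  have hmem : (u1, u2) ∈ K := ⟨h1.le, h2.le, h12.le⟩
  have hg1M : |g1 (u1, u2)| ≤ M := hM1' _ hmem
  have hg2M : |g2 (u1, u2)| ≤ M := hM2' _ hmem
  have hL1 : |u1 * Real.log (u1 / ub1)| ≤ A1 := by
    rw [hA1def]; exact aux_abs_mul_log_div u1 ub1 h1 (by linarith) hub1
  have hL2 : |u2 * Real.log (u2 / ub2)| ≤ A2 := by
    rw [hA2def]; exact aux_abs_mul_log_div u2 ub2 h2 (by linarith) hub2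
  rcases le_or_gt δ u3 with hcase | hcase
  · -- u3 bounded away from 0
    have hL3 : |Real.log (u3 / ub3)| ≤ B := by
      rw [Real.log_div hu3.ne' hub3.ne']
      have hlu3 : Real.log δ ≤ Real.log u3 := Real.log_le_log hδ0 hcase
      have hlu3' : Real.log u3 ≤ 0 := Real.log_nonpos hu3.le hu3lt.le
      have habs : |Real.log u3| ≤ -Real.log δ := by rw [abs_of_nonpos hlu3']; linarith
      calc |Real.log u3 - Real.log ub3| ≤ |Real.log u3| + |Real.log ub3| := abs_sub _ _
        _ ≤ B := by rw [hBdef]; linarith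
    have t1 := aux_term_bound (g1 (u1, u2)) u1 (Real.log (u1/ub1)) (Real.log (u3/ub3)) M A1 B
      hg1M h1.le (by linarith) hL1 hL3
    have t2 := aux_term_bound (g2 (u1, u2)) u2 (Real.log (u2/ub2)) (Real.log (u3/ub3)) M A2 B
      hg2M h2.le (by linarith) hL2 hL3
    have hMB : 0 ≤ M * B := mul_nonneg (by linarith) hBnn
    linarith
  · -- u3 small: g's are nonpositive and log(u3/ub3) ≤ 0
    have hsum : 1 - ε < u1 + u2 := by
      have : u1 + u2 = 1 - u3 := by simp only [hu3def]; ring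
      rw [this]; linarith
    obtain ⟨hg1neg, hg2neg⟩ := hneg (u1, u2) h1.le h2.le hsum h12.le
    have hL3neg : Real.log (u3 / ub3) ≤ 0 := by
      apply Real.log_nonpos (by positivity)
      rw [div_le_one hub3]; linarith
    have t1 := aux_term_bound2 (g1 (u1, u2)) u1 (Real.log (u1/ub1)) (Real.log (u3/ub3)) M A1
      hg1M hg1neg h1.le hL3neg hL1
    have t2 := aux_term_bound2 (g2 (u1, u2)) u2 (Real.log (u2/ub2)) (Real.log (u3/ub3)) M A2
      hg2M hg2neg h2.le hL3neg hL2
    have hMB : 0 ≤ M * B := mul_nonneg (by linarith) hBnn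
    linarith
end

section
/- For k = 1,2,3 let φ_k : (0,1) → ℝ be C², convex, and satisfy φ_k''(s) → +∞ as s → 0+. Define h(u) = φ_1(u1) + φ_2(u2) + φ_3(u3) with u3 = 1 − u1 − u2, and let H(u) be the Hessian of h with respect to (u1,u2), i.e. H(u) = [[φ_1''(u1)+φ_3''(u3), φ_3''(u3)],[φ_3''(u3), φ_2''(u2)+φ_3''(u3)]]. Let A(u) be the general linear diffusion matrix with entries A_{ij}(u) = α_{ij} + β_{ij}u1 + γ_{ij}u2 (i,j = 1,2) with real coefficients. If zᵀH(u)A(u)z ≥ 0 for all z ∈ ℝ² and all u ∈ D, then α12 = α21 = β21 = γ12 = 0, β12 = α11 − α22 + β11 − β22, and γ21 = α22 − α11 + γ22 − γ11. -/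
open Matrix Filter Topology

/-- The general linear diffusion matrix `A_{ij}(u) = α_{ij} + β_{ij}u₁ + γ_{ij}u₂`. -/
noncomputable def AmatG (α11 α12 α21 α22 β11 β12 β21 β22 γ11 γ12 γ21 γ22 u1 u2 : ℝ) :
    Matrix (Fin 2) (Fin 2) ℝ :=
  !![α11 + β11*u1 + γ11*u2, α12 + β12*u1 + γ12*u2;
     α21 + β21*u1 + γ21*u2, α22 + β22*u1 + γ22*u2]

/-- From positivity of the quadratic form of `H * A` we get a discriminant inequality. -/
lemma keyHA (a b c A11 A12 A21 A22 : ℝ)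
    (h : ∀ z : Fin 2 → ℝ, 0 ≤ z ⬝ᵥ (((!![a+c, c; c, b+c] : Matrix (Fin 2) (Fin 2) ℝ) *
      !![A11, A12; A21, A22]).mulVec z)) :
    (a*A12 + b*A21 + c*(A11+A12+A21+A22))^2 ≤
      4*(((a+c)*A11+c*A21)*(c*A12+(b+c)*A22)) := by
  have hq : ∀ x : ℝ, 0 ≤ ((a+c)*A11+c*A21)*(x*x) +
      (a*A12+b*A21+c*(A11+A12+A21+A22))*x + (c*A12+(b+c)*A22) := by
    intro x
    have hx := h ![x, 1]
    have e : (![x, (1:ℝ)]) ⬝ᵥ (((!![a+c, c; c, b+c] : Matrix (Fin 2) (Fin 2) ℝ) *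
        !![A11, A12; A21, A22]).mulVec ![x,1]) =
        ((a+c)*A11+c*A21)*(x*x) + (a*A12+b*A21+c*(A11+A12+A21+A22))*x
          + (c*A12+(b+c)*A22) := by
      simp [Matrix.mul_apply, Matrix.mulVec, dotProduct, Fin.sum_univ_two]
      ring
    rw [e] at hx
    exact hx
  have hd := discrim_le_zero hq
  rw [discrim] at hd
  ring_nf at hd ⊢
  linarith

/-- The swapped form of `keyHA`. -/
lemma keyHA' (a b c A11 A12 A21 A22 : ℝ)
    (h : ∀ z : Fin 2 → ℝ, 0 ≤ z ⬝ᵥ (((!![a+c, c; c, b+c] : Matrix (Fin 2) (Fin 2) ℝ) *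
      !![A11, A12; A21, A22]).mulVec z)) :
    (b*A21 + a*A12 + c*(A22+A21+A12+A11))^2 ≤
      4*(((b+c)*A22+c*A12)*(c*A21+(a+c)*A11)) := by
  have hk := keyHA a b c A11 A12 A21 A22 h
  have e1 : (b*A21 + a*A12 + c*(A22+A21+A12+A11)) =
      (a*A12 + b*A21 + c*(A11+A12+A21+A22)) := by ring
  have e2 : 4*(((b+c)*A22+c*A12)*(c*A21+(a+c)*A11)) =
      4*(((a+c)*A11+c*A21)*(c*A12+(b+c)*A22)) := by ring
  rw [e1, e2]; exact hk

lemma tendsto_lin {l : Filter ℝ} {x : ℝ} (hl : l ≤ nhds x) (p q c : ℝ) :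
    Filter.Tendsto (fun t => p + q*t + c) l (nhds (p + q*x + c)) :=
  (Continuous.tendsto (by fun_prop) x).mono_left hl

lemma tendsto_lin2 {l : Filter ℝ} {x : ℝ} (hl : l ≤ nhds x) (p q : ℝ) :
    Filter.Tendsto (fun t => p + q*t) l (nhds (p + q*x)) :=
  (Continuous.tendsto (by fun_prop) x).mono_left hl

/-- If the diagonal blow-up coefficient `a` tends to infinity while everything else
converges, then the limiting off-diagonal entry `A12` must vanish. -/
lemma keylim {l : Filter ℝ} [l.NeBot] {a b c A11 A12 A21 A22 : ℝ → ℝ}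
    {b0 c0 x11 x12 x21 x22 : ℝ}
    (ha : Tendsto a l atTop) (hb : Tendsto b l (nhds b0)) (hc : Tendsto c l (nhds c0))
    (h11 : Tendsto A11 l (nhds x11)) (h12 : Tendsto A12 l (nhds x12))
    (h21 : Tendsto A21 l (nhds x21)) (h22 : Tendsto A22 l (nhds x22))
    (hineq : ∀ᶠ t in l, (a t*A12 t + b t*A21 t + c t*(A11 t+A12 t+A21 t+A22 t))^2 ≤
      4*(((a t+c t)*A11 t+c t*A21 t)*(c t*A12 t+(b t+c t)*A22 t))) :
    x12 = 0 := by
  have hia : Tendsto (fun t => (a t)⁻¹) l (nhds 0) := ha.inv_tendsto_atTop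
  have hL : Tendsto
      (fun t => (A12 t + (b t*A21 t + c t*(A11 t+A12 t+A21 t+A22 t))*(a t)⁻¹)^2)
      l (nhds (x12^2)) := by
    have h := (h12.add (((hb.mul h21).add
      (hc.mul (((h11.add h12).add h21).add h22))).mul hia)).pow 2
    simpa using h
  have hR : Tendsto (fun t => 4*(((1+c t*(a t)⁻¹)*A11 t + c t*A21 t*(a t)⁻¹)*
      ((c t*A12 t+(b t+c t)*A22 t)*(a t)⁻¹))) l (nhds 0) := by
    have h' : Tendsto (fun t => 4*(((1+c t*(a t)⁻¹)*A11 t + c t*A21 t*(a t)⁻¹)*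
        ((c t*A12 t+(b t+c t)*A22 t)*(a t)⁻¹))) l
        (nhds ((4:ℝ)*(((1+c0*0)*x11 + c0*x21*0)*((c0*x12+(b0+c0)*x22)*0)))) :=
      tendsto_const_nhds.mul ((((tendsto_const_nhds.add (hc.mul hia)).mul h11).add
        ((hc.mul h21).mul hia)).mul (((hc.mul h12).add ((hb.add hc).mul h22)).mul hia))
    simpa using h'
  have hle : ∀ᶠ t in l,
      (A12 t + (b t*A21 t + c t*(A11 t+A12 t+A21 t+A22 t))*(a t)⁻¹)^2 ≤
      4*(((1+c t*(a t)⁻¹)*A11 t + c t*A21 t*(a t)⁻¹)*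
      ((c t*A12 t+(b t+c t)*A22 t)*(a t)⁻¹)) := by
    filter_upwards [hineq, ha.eventually_gt_atTop 0] with t h hpos
    have h2 : (0:ℝ) < (a t)^2 := by positivity
    have hne : a t ≠ 0 := ne_of_gt hpos
    have h1 : (a t)⁻¹ * a t = 1 := inv_mul_cancel₀ hne
    rw [← mul_le_mul_iff_of_pos_right h2]
    have e1 : (A12 t + (b t*A21 t + c t*(A11 t+A12 t+A21 t+A22 t))*(a t)⁻¹)^2 * (a t)^2 =
        (a t*A12 t + b t*A21 t + c t*(A11 t+A12 t+A21 t+A22 t))^2 := by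
      linear_combination (2*(A12 t)*((b t*A21 t + c t*(A11 t+A12 t+A21 t+A22 t)))*(a t) +
        ((b t*A21 t + c t*(A11 t+A12 t+A21 t+A22 t)))^2*((a t)⁻¹*(a t)+1)) * h1
    have e2 : 4*(((1+c t*(a t)⁻¹)*A11 t + c t*A21 t*(a t)⁻¹)*
        ((c t*A12 t+(b t+c t)*A22 t)*(a t)⁻¹)) * (a t)^2 =
        4*(((a t+c t)*A11 t+c t*A21 t)*(c t*A12 t+(b t+c t)*A22 t)) := by
      linear_combination (4*(c t*A12 t+(b t+c t)*A22 t)*(A11 t*(a t) +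
        (c t*A11 t + c t*A21 t)*((a t)⁻¹*(a t)+1))) * h1
    rw [e1, e2]
    exact h
  have hle0 : x12^2 ≤ 0 := le_of_tendsto_of_tendsto hL hR hle
  exact (pow_eq_zero_iff two_ne_zero).mp (le_antisymm hle0 (sq_nonneg _))

/-- If the common coefficient `c` blows up, we get the limiting inequality
`(x11+x12+x21+x22)^2 ≤ 4 (x11+x21)(x12+x22)`. -/
lemma keylim3 {l : Filter ℝ} [l.NeBot] {a b c A11 A12 A21 A22 : ℝ → ℝ}
    {a0 b0 x11 x12 x21 x22 : ℝ}
    (ha : Tendsto a l (nhds a0)) (hb : Tendsto b l (nhds b0)) (hc : Tendsto c l atTop)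
    (h11 : Tendsto A11 l (nhds x11)) (h12 : Tendsto A12 l (nhds x12))
    (h21 : Tendsto A21 l (nhds x21)) (h22 : Tendsto A22 l (nhds x22))
    (hineq : ∀ᶠ t in l, (a t*A12 t + b t*A21 t + c t*(A11 t+A12 t+A21 t+A22 t))^2 ≤
      4*(((a t+c t)*A11 t+c t*A21 t)*(c t*A12 t+(b t+c t)*A22 t))) :
    x11 + x21 = x12 + x22 := by
  have hic : Tendsto (fun t => (c t)⁻¹) l (nhds 0) := hc.inv_tendsto_atTop
  have hL : Tendsto
      (fun t => ((a t*A12 t + b t*A21 t)*(c t)⁻¹ + (A11 t+A12 t+A21 t+A22 t))^2)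
      l (nhds ((x11+x12+x21+x22)^2)) := by
    have h := ((((ha.mul h12).add (hb.mul h21)).mul hic).add
      (((h11.add h12).add h21).add h22)).pow 2
    simpa using h
  have hR : Tendsto (fun t => 4*(((a t*(c t)⁻¹+1)*A11 t + A21 t)*
      (A12 t + (b t*(c t)⁻¹+1)*A22 t))) l (nhds (4*((x11+x21)*(x12+x22)))) := by
    have h' : Tendsto (fun t => 4*(((a t*(c t)⁻¹+1)*A11 t + A21 t)*
        (A12 t + (b t*(c t)⁻¹+1)*A22 t))) l
        (nhds ((4:ℝ)*(((a0*0+1)*x11 + x21)*(x12 + (b0*0+1)*x22)))) :=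
      tendsto_const_nhds.mul (((((ha.mul hic).add tendsto_const_nhds).mul h11).add
      h21).mul (h12.add (((hb.mul hic).add tendsto_const_nhds).mul h22)))
    simpa using h'
  have hle : ∀ᶠ t in l,
      ((a t*A12 t + b t*A21 t)*(c t)⁻¹ + (A11 t+A12 t+A21 t+A22 t))^2 ≤
      4*(((a t*(c t)⁻¹+1)*A11 t + A21 t)*(A12 t + (b t*(c t)⁻¹+1)*A22 t)) := by
    filter_upwards [hineq, hc.eventually_gt_atTop 0] with t h hpos
    have h2 : (0:ℝ) < (c t)^2 := by positivity
    have hne : c t ≠ 0 := ne_of_gt hpos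
    have h1 : (c t)⁻¹ * c t = 1 := inv_mul_cancel₀ hne
    rw [← mul_le_mul_iff_of_pos_right h2]
    have e1 : ((a t*A12 t + b t*A21 t)*(c t)⁻¹ + (A11 t+A12 t+A21 t+A22 t))^2 * (c t)^2 =
        (a t*A12 t + b t*A21 t + c t*(A11 t+A12 t+A21 t+A22 t))^2 := by
      linear_combination ((a t*A12 t + b t*A21 t)^2*((c t)⁻¹*(c t)+1) +
        2*(a t*A12 t + b t*A21 t)*(A11 t+A12 t+A21 t+A22 t)*(c t)) * h1
    have e2 : 4*(((a t*(c t)⁻¹+1)*A11 t + A21 t)*(A12 t + (b t*(c t)⁻¹+1)*A22 t)) * (c t)^2 =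
        4*(((a t+c t)*A11 t+c t*A21 t)*(c t*A12 t+(b t+c t)*A22 t)) := by
      linear_combination (4*((((a t*(c t)⁻¹+1)*A11 t + A21 t)*(c t))*(b t*A22 t) +
        (c t*A12 t+(b t+c t)*A22 t)*(a t*A11 t))) * h1
    rw [e1, e2]
    exact h
  have hfin : (x11+x12+x21+x22)^2 ≤ 4*((x11+x21)*(x12+x22)) :=
    le_of_tendsto_of_tendsto hL hR hle
  have hsq : ((x11+x21)-(x12+x22))^2 ≤ 0 := by nlinarith [hfin]
  have h0 := (pow_eq_zero_iff two_ne_zero).mp (le_antisymm hsq (sq_nonneg _))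
  linarith [h0]

set_option maxHeartbeats 1000000 in
/-- Necessary conditions for the positive semidefiniteness of `H(u)A(u)` on `D`,
where `H` is the Hessian of `h(u) = φ₁(u₁) + φ₂(u₂) + φ₃(u₃)` with `φ_k` convex,
`C²` on `(0,1)`, and `φ_k''(s) → ∞` as `s → 0⁺`. -/
theorem stmt13 (φ1 φ2 φ3 : ℝ → ℝ)
    (hC1 : ContDiffOn ℝ 2 φ1 (Set.Ioo 0 1))
    (hC2 : ContDiffOn ℝ 2 φ2 (Set.Ioo 0 1))
    (hC3 : ContDiffOn ℝ 2 φ3 (Set.Ioo 0 1))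
    (hconv1 : ConvexOn ℝ (Set.Ioo 0 1) φ1)
    (hconv2 : ConvexOn ℝ (Set.Ioo 0 1) φ2)
    (hconv3 : ConvexOn ℝ (Set.Ioo 0 1) φ3)
    (hlim1 : Filter.Tendsto (fun s => deriv (deriv φ1) s) (nhdsWithin 0 (Set.Ioi 0))
      Filter.atTop)
    (hlim2 : Filter.Tendsto (fun s => deriv (deriv φ2) s) (nhdsWithin 0 (Set.Ioi 0))
      Filter.atTop)
    (hlim3 : Filter.Tendsto (fun s => deriv (deriv φ3) s) (nhdsWithin 0 (Set.Ioi 0))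
      Filter.atTop)
    (α11 α12 α21 α22 β11 β12 β21 β22 γ11 γ12 γ21 γ22 : ℝ)
    (hpsd : ∀ u1 u2 : ℝ, 0 < u1 → 0 < u2 → u1 + u2 < 1 → ∀ z : Fin 2 → ℝ,
      0 ≤ z ⬝ᵥ ((!![deriv (deriv φ1) u1 + deriv (deriv φ3) (1-u1-u2),
                     deriv (deriv φ3) (1-u1-u2);
                     deriv (deriv φ3) (1-u1-u2),
                     deriv (deriv φ2) u2 + deriv (deriv φ3) (1-u1-u2)]
          * AmatG α11 α12 α21 α22 β11 β12 β21 β22 γ11 γ12 γ21 γ22 u1 u2).mulVec z)) :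
    α12 = 0 ∧ α21 = 0 ∧ β21 = 0 ∧ γ12 = 0 ∧
    β12 = α11 - α22 + β11 - β22 ∧ γ21 = α22 - α11 + γ22 - γ11 := by
  simp only [AmatG] at hpsd
  have hcont2 : ContinuousOn (deriv (deriv φ2)) (Set.Ioo 0 1) := by
    have h1 := hC2.deriv_of_isOpen (m := 1) isOpen_Ioo (by norm_num)
    exact (h1.deriv_of_isOpen (m := 0) isOpen_Ioo (by norm_num)).continuousOn
  have hcont3 : ContinuousOn (deriv (deriv φ3)) (Set.Ioo 0 1) := by
    have h1 := hC3.deriv_of_isOpen (m := 1) isOpen_Ioo (by norm_num)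
    exact (h1.deriv_of_isOpen (m := 0) isOpen_Ioo (by norm_num)).continuousOn
  -- Step A : α12 + γ12 * u2 = 0 for all u2 ∈ (0,1)
  have stepA : ∀ u2 : ℝ, 0 < u2 → u2 < 1 → α12 + γ12*u2 = 0 := by
    intro u2 h0 h1
    set l : Filter ℝ := nhdsWithin 0 (Set.Ioo 0 (1-u2)) with hldef
    haveI hne : l.NeBot := by
      rw [hldef]
      apply mem_closure_iff_nhdsWithin_neBot.mp
      rw [closure_Ioo (by intro h; linarith [h] : (0:ℝ) ≠ 1-u2)]
      exact ⟨le_refl 0, by linarith⟩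
    have hleN : l ≤ nhds (0:ℝ) := nhdsWithin_le_nhds
    have ha : Tendsto (fun t => deriv (deriv φ1) t) l atTop :=
      hlim1.mono_left (nhdsWithin_mono 0 (fun x hx => hx.1))
    have hmem : (1-u2) ∈ Set.Ioo (0:ℝ) 1 := ⟨by linarith, by linarith⟩
    have hg : Tendsto (fun t => 1 - t - u2) l (nhdsWithin (1-u2) (Set.Ioo 0 1)) := by
      apply tendsto_nhdsWithin_of_tendsto_nhds_of_eventually_within
      · have h : Tendsto (fun t : ℝ => 1 - t - u2) (nhds 0) (nhds (1 - 0 - u2)) :=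
          Continuous.tendsto (by fun_prop) 0
        have h' := h.mono_left hleN
        simpa using h'
      · filter_upwards [eventually_mem_nhdsWithin] with t ht
        exact ⟨by linarith [ht.2], by linarith [ht.1]⟩
    have hc : Tendsto (fun t => deriv (deriv φ3) (1 - t - u2)) l
        (nhds (deriv (deriv φ3) (1-u2))) := (hcont3 _ hmem).tendsto.comp hg
    have hb : Tendsto (fun _ : ℝ => deriv (deriv φ2) u2) l
        (nhds (deriv (deriv φ2) u2)) := tendsto_const_nhds
    have h11 : Tendsto (fun t => α11 + β11*t + γ11*u2) l (nhds (α11 + γ11*u2)) := by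
      simpa using tendsto_lin hleN α11 β11 (γ11*u2)
    have h12 : Tendsto (fun t => α12 + β12*t + γ12*u2) l (nhds (α12 + γ12*u2)) := by
      simpa using tendsto_lin hleN α12 β12 (γ12*u2)
    have h21 : Tendsto (fun t => α21 + β21*t + γ21*u2) l (nhds (α21 + γ21*u2)) := by
      simpa using tendsto_lin hleN α21 β21 (γ21*u2)
    have h22 : Tendsto (fun t => α22 + β22*t + γ22*u2) l (nhds (α22 + γ22*u2)) := by
      simpa using tendsto_lin hleN α22 β22 (γ22*u2)
    refine keylim ha hb hc h11 h12 h21 h22 ?_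
    filter_upwards [eventually_mem_nhdsWithin] with t ht
    exact keyHA _ _ _ _ _ _ _ (fun z => hpsd t u2 ht.1 h0 (by linarith [ht.2]) z)
  -- Step B : α21 + β21 * u1 = 0 for all u1 ∈ (0,1)
  have stepB : ∀ u1 : ℝ, 0 < u1 → u1 < 1 → α21 + β21*u1 = 0 := by
    intro u1 h0 h1
    set l : Filter ℝ := nhdsWithin 0 (Set.Ioo 0 (1-u1)) with hldef
    haveI hne : l.NeBot := by
      rw [hldef]
      apply mem_closure_iff_nhdsWithin_neBot.mp
      rw [closure_Ioo (by intro h; linarith [h] : (0:ℝ) ≠ 1-u1)]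
      exact ⟨le_refl 0, by linarith⟩
    have hleN : l ≤ nhds (0:ℝ) := nhdsWithin_le_nhds
    have ha : Tendsto (fun t => deriv (deriv φ2) t) l atTop :=
      hlim2.mono_left (nhdsWithin_mono 0 (fun x hx => hx.1))
    have hmem : (1-u1) ∈ Set.Ioo (0:ℝ) 1 := ⟨by linarith, by linarith⟩
    have hg : Tendsto (fun t => 1 - u1 - t) l (nhdsWithin (1-u1) (Set.Ioo 0 1)) := by
      apply tendsto_nhdsWithin_of_tendsto_nhds_of_eventually_within
      · have h : Tendsto (fun t : ℝ => 1 - u1 - t) (nhds 0) (nhds (1 - u1 - 0)) :=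
          Continuous.tendsto (by fun_prop) 0
        have h' := h.mono_left hleN
        simpa using h'
      · filter_upwards [eventually_mem_nhdsWithin] with t ht
        exact ⟨by linarith [ht.2], by linarith [ht.1]⟩
    have hc : Tendsto (fun t => deriv (deriv φ3) (1 - u1 - t)) l
        (nhds (deriv (deriv φ3) (1-u1))) := (hcont3 _ hmem).tendsto.comp hg
    have hb : Tendsto (fun _ : ℝ => deriv (deriv φ1) u1) l
        (nhds (deriv (deriv φ1) u1)) := tendsto_const_nhds
    have h11 : Tendsto (fun t => α22 + β22*u1 + γ22*t) l (nhds (α22 + β22*u1)) := by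
      simpa using tendsto_lin2 hleN (α22 + β22*u1) γ22
    have h12 : Tendsto (fun t => α21 + β21*u1 + γ21*t) l (nhds (α21 + β21*u1)) := by
      simpa using tendsto_lin2 hleN (α21 + β21*u1) γ21
    have h21 : Tendsto (fun t => α12 + β12*u1 + γ12*t) l (nhds (α12 + β12*u1)) := by
      simpa using tendsto_lin2 hleN (α12 + β12*u1) γ12
    have h22 : Tendsto (fun t => α11 + β11*u1 + γ11*t) l (nhds (α11 + β11*u1)) := by
      simpa using tendsto_lin2 hleN (α11 + β11*u1) γ11
    refine keylim ha hb hc h11 h12 h21 h22 ?_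
    filter_upwards [eventually_mem_nhdsWithin] with t ht
    exact keyHA' _ _ _ _ _ _ _ (fun z => hpsd u1 t h0 ht.1 (by linarith [ht.2]) z)
  -- Step C : (A11 + A21 = A12 + A22) along the edge u2 = 1 - u1
  have stepC : ∀ u1 : ℝ, 0 < u1 → u1 < 1 →
      (α11 + β11*u1 + γ11*(1-u1)) + (α21 + β21*u1 + γ21*(1-u1)) =
      (α12 + β12*u1 + γ12*(1-u1)) + (α22 + β22*u1 + γ22*(1-u1)) := by
    intro u1 h0 h1
    set l : Filter ℝ := nhdsWithin (1-u1) (Set.Ioo 0 (1-u1)) with hldef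
    haveI hne : l.NeBot := by
      rw [hldef]
      apply mem_closure_iff_nhdsWithin_neBot.mp
      rw [closure_Ioo (by intro h; linarith [h] : (0:ℝ) ≠ 1-u1)]
      exact ⟨by linarith, le_refl _⟩
    have hleN : l ≤ nhds (1-u1 : ℝ) := nhdsWithin_le_nhds
    have hmem : (1-u1) ∈ Set.Ioo (0:ℝ) 1 := ⟨by linarith, by linarith⟩
    have hg : Tendsto (fun t => 1 - u1 - t) l (nhdsWithin 0 (Set.Ioi 0)) := by
      apply tendsto_nhdsWithin_of_tendsto_nhds_of_eventually_within
      · have h : Tendsto (fun t : ℝ => 1 - u1 - t) (nhds (1-u1)) (nhds (1 - u1 - (1-u1))) :=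
          Continuous.tendsto (by fun_prop) (1-u1)
        have h' := h.mono_left hleN
        simpa using h'
      · filter_upwards [eventually_mem_nhdsWithin] with t ht
        exact sub_pos.mpr ht.2
    have hc : Tendsto (fun t => deriv (deriv φ3) (1 - u1 - t)) l atTop := hlim3.comp hg
    have hb : Tendsto (fun t => deriv (deriv φ2) t) l
        (nhds (deriv (deriv φ2) (1-u1))) :=
      ((hcont2 _ hmem)).mono_left (nhdsWithin_mono _ (fun x hx => ⟨hx.1, by linarith [hx.2]⟩))
    have ha : Tendsto (fun _ : ℝ => deriv (deriv φ1) u1) l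
        (nhds (deriv (deriv φ1) u1)) := tendsto_const_nhds
    have h11 : Tendsto (fun t => α11 + β11*u1 + γ11*t) l
        (nhds (α11 + β11*u1 + γ11*(1-u1))) := tendsto_lin2 hleN (α11 + β11*u1) γ11
    have h12 : Tendsto (fun t => α12 + β12*u1 + γ12*t) l
        (nhds (α12 + β12*u1 + γ12*(1-u1))) := tendsto_lin2 hleN (α12 + β12*u1) γ12
    have h21 : Tendsto (fun t => α21 + β21*u1 + γ21*t) l
        (nhds (α21 + β21*u1 + γ21*(1-u1))) := tendsto_lin2 hleN (α21 + β21*u1) γ21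
    have h22 : Tendsto (fun t => α22 + β22*u1 + γ22*t) l
        (nhds (α22 + β22*u1 + γ22*(1-u1))) := tendsto_lin2 hleN (α22 + β22*u1) γ22
    refine keylim3 ha hb hc h11 h12 h21 h22 ?_
    filter_upwards [eventually_mem_nhdsWithin] with t ht
    exact keyHA _ _ _ _ _ _ _ (fun z => hpsd u1 t h0 ht.1 (by linarith [ht.2]) z)
  have A1 := stepA (1/4) (by norm_num) (by norm_num)
  have A2 := stepA (1/2) (by norm_num) (by norm_num)
  have B1 := stepB (1/4) (by norm_num) (by norm_num)
  have B2 := stepB (1/2) (by norm_num) (by norm_num)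
  have C1 := stepC (1/4) (by norm_num) (by norm_num)
  have C2 := stepC (1/2) (by norm_num) (by norm_num)
  norm_num at A1 A2 B1 B2 C1 C2
  refine ⟨by linarith, by linarith, by linarith, by linarith, by linarith, by linarith⟩
end

section
/- Let α_{ij}, β_{ij}, γ_{ij} (i,j = 1,2) be real numbers and define the 2×2 matrices A^(1) = (α_{ij}+β_{ij}), A^(2) = (α_{ij}+γ_{ij}), A^(3) = (α_{ij}), and H^(1) = [[1,0],[0,0]], H^(2) = [[0,0],[0,1]], H^(3) = [[1,1],[1,1]]. If zᵀH^(i)A^(j)z ≥ 0 for all z ∈ ℝ² and all i,j ∈ {1,2,3} with j ≠ i, then α12 = α21 = β21 = γ12 = 0, β12 = α11 − α22 + β11 − β22, and γ21 = α22 − α11 + γ22 − γ11. -/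
open Matrix

/-- The matrices `H⁽¹⁾, H⁽²⁾, H⁽³⁾`. -/
def Hm : Fin 3 → Matrix (Fin 2) (Fin 2) ℝ :=
  ![!![1, 0; 0, 0], !![0, 0; 0, 1], !![1, 1; 1, 1]]

/-- The matrices `A⁽¹⁾ = (α_{ij}+β_{ij})`, `A⁽²⁾ = (α_{ij}+γ_{ij})`, `A⁽³⁾ = (α_{ij})`. -/
def Am (α11 α12 α21 α22 β11 β12 β21 β22 γ11 γ12 γ21 γ22 : ℝ) :
    Fin 3 → Matrix (Fin 2) (Fin 2) ℝ :=
  ![!![α11 + β11, α12 + β12; α21 + β21, α22 + β22],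
    !![α11 + γ11, α12 + γ12; α21 + γ21, α22 + γ22],
    !![α11, α12; α21, α22]]

/-- A linear function that is nonnegative everywhere has zero slope. -/
lemma lin_slope_zero (a b : ℝ) (h : ∀ t : ℝ, 0 ≤ a + b * t) : b = 0 := by
  by_contra hb
  have h1 := h ((-a - 1) / b)
  have h2 : b * ((-a - 1) / b) = -a - 1 := by field_simp
  rw [h2] at h1
  linarith

/-- If `H⁽ⁱ⁾A⁽ʲ⁾` is positive semidefinite for all `i ≠ j`, then
`α12 = α21 = β21 = γ12 = 0`, `β12 = α11 - α22 + β11 - β22`, `γ21 = α22 - α11 + γ22 - γ11`. -/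
theorem stmt14 (α11 α12 α21 α22 β11 β12 β21 β22 γ11 γ12 γ21 γ22 : ℝ)
    (hpsd : ∀ i j : Fin 3, j ≠ i → ∀ z : Fin 2 → ℝ,
      0 ≤ z ⬝ᵥ ((Hm i * Am α11 α12 α21 α22 β11 β12 β21 β22 γ11 γ12 γ21 γ22 j).mulVec z)) :
    α12 = 0 ∧ α21 = 0 ∧ β21 = 0 ∧ γ12 = 0 ∧
    β12 = α11 - α22 + β11 - β22 ∧ γ21 = α22 - α11 + γ22 - γ11 := by
  have e1 : α12 = 0 := by
    apply lin_slope_zero α11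
    intro t
    have h := hpsd 0 2 (by decide) ![1, t]
    simp [Hm, Am, mulVec, dotProduct, Matrix.mul_apply, Fin.sum_univ_succ] at h
    linarith
  have e2 : α12 + γ12 = 0 := by
    apply lin_slope_zero (α11 + γ11)
    intro t
    have h := hpsd 0 1 (by decide) ![1, t]
    simp [Hm, Am, mulVec, dotProduct, Matrix.mul_apply, Fin.sum_univ_succ] at h
    linarith
  have e3 : α21 = 0 := by
    apply lin_slope_zero α22
    intro t
    have h := hpsd 1 2 (by decide) ![t, 1]
    simp [Hm, Am, mulVec, dotProduct, Matrix.mul_apply, Fin.sum_univ_succ] at h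
    linarith
  have e4 : α21 + β21 = 0 := by
    apply lin_slope_zero (α22 + β22)
    intro t
    have h := hpsd 1 0 (by decide) ![t, 1]
    simp [Hm, Am, mulVec, dotProduct, Matrix.mul_apply, Fin.sum_univ_succ] at h
    linarith
  have e5 : (α11 + β11 + (α21 + β21)) - (α12 + β12 + (α22 + β22)) = 0 := by
    apply lin_slope_zero (α12 + β12 + (α22 + β22))
    intro t
    have h := hpsd 2 0 (by decide) ![t, 1 - t]
    simp [Hm, Am, mulVec, dotProduct, Matrix.mul_apply, Fin.sum_univ_succ] at h
    nlinarith [h]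
  have e6 : (α11 + γ11 + (α21 + γ21)) - (α12 + γ12 + (α22 + γ22)) = 0 := by
    apply lin_slope_zero (α12 + γ12 + (α22 + γ22))
    intro t
    have h := hpsd 2 1 (by decide) ![t, 1 - t]
    simp [Hm, Am, mulVec, dotProduct, Matrix.mul_apply, Fin.sum_univ_succ] at h
    nlinarith [h]
  refine ⟨e1, e3, by linarith, by linarith, by linarith, by linarith⟩
end

section
/- Let α11, α22, β11, β12, γ22 be real numbers satisfying α11 ≥ 0, α22 ≥ 0, β12 ≤ α11 + min{β11, γ22}, α11 + β11 ≥ 0, α22 + γ22 ≥ 0. Define f1(u2,u3) = (1−u2−u3)·u3·(H A)_{11}(1−u2−u3, u2) and f2(u1,u3) = (1−u1−u3)·u3·(H A)_{22}(u1, 1−u1−u3), where (HA)_{ij} denotes the (i,j) entry of H(u)A(u). Then f1 and f2 extend to polynomials on ℝ² that are nonnegative on the boundary of the triangle {(x,y) : x > 0, y > 0, x+y < 1}, and their Laplacians satisfy Δ_{(u2,u3)} f1 = −Δ_{(u1,u3)} f2 = 2(α11 − α22 + β11 − γ22). -/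
open Matrix

/-- The polynomial extension of `f₁(u₂,u₃) = (1-u₂-u₃)u₃(HA)₁₁(1-u₂-u₃, u₂)`. -/
noncomputable def f1p (a11 a22 b11 b12 g22 u2 u3 : ℝ) : ℝ :=
  (1-u2) * (a11 + b11*(1-u2-u3) + (g22-b12)*u2) + (1-u2-u3)*u2*(a22-a11+b12)

/-- The polynomial extension of `f₂(u₁,u₃) = (1-u₁-u₃)u₃(HA)₂₂(u₁, 1-u₁-u₃)`. -/
noncomputable def f2p (a11 a22 b11 b12 g22 u1 u3 : ℝ) : ℝ :=
  u1*(1-u1-u3)*b12 + (1-u1) * (a22 + (b11-(a22-a11+b12))*u1 + g22*(1-u1-u3))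

lemma quad_deriv2 (A B C : ℝ) (f : ℝ → ℝ) (h : ∀ x, f x = A*x^2+B*x+C) (x : ℝ) :
    deriv (deriv f) x = 2*A := by
  have hf : f = fun x => A*x^2+B*x+C := funext h
  subst hf
  have h1 : ∀ t : ℝ, HasDerivAt (fun x : ℝ => A*x^2+B*x+C) (2*A*t+B) t := by
    intro t
    have := (((hasDerivAt_pow 2 t).const_mul A).add ((hasDerivAt_id t).const_mul B)).add_const C
    have e : 2*A*t+B = A * (((2:ℕ):ℝ) * t ^ (2 - 1)) + B * 1 := by push_cast; ring
    rw [e]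
    exact this
  have hd : deriv (fun x : ℝ => A*x^2+B*x+C) = fun t => 2*A*t+B := funext fun t => (h1 t).deriv
  rw [hd]
  have h2 : HasDerivAt (fun t : ℝ => 2*A*t+B) (2*A) x := by
    have := ((hasDerivAt_id x).const_mul (2*A)).add_const B
    simpa using this
  exact h2.deriv

/-- `f1p` and `f2p` are the polynomial extensions of
`(1-u₂-u₃)u₃(HA)₁₁` and `(1-u₁-u₃)u₃(HA)₂₂`; they are nonnegative on the boundary of
the triangle, and their Laplacians are the opposite constants
`±2(α11 - α22 + β11 - γ22)`. -/
theorem stmt18 (a11 a22 b11 b12 g22 : ℝ)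
    (h1 : 0 ≤ a11) (h2 : 0 ≤ a22) (h3 : b12 ≤ a11 + min b11 g22)
    (h4 : 0 ≤ a11 + b11) (h5 : 0 ≤ a22 + g22) :
    (∀ u2 u3 : ℝ, 0 < u2 → 0 < u3 → u2 + u3 < 1 →
      f1p a11 a22 b11 b12 g22 u2 u3 =
        (1-u2-u3)*u3*((Hmat (1-u2-u3) u2 * Amat a11 a22 b11 b12 g22 (1-u2-u3) u2) 0 0)) ∧
    (∀ u1 u3 : ℝ, 0 < u1 → 0 < u3 → u1 + u3 < 1 →
      f2p a11 a22 b11 b12 g22 u1 u3 =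
        (1-u1-u3)*u3*((Hmat u1 (1-u1-u3) * Amat a11 a22 b11 b12 g22 u1 (1-u1-u3)) 1 1)) ∧
    (∀ x y : ℝ, 0 ≤ x → 0 ≤ y → x + y ≤ 1 → (x = 0 ∨ y = 0 ∨ x + y = 1) →
      0 ≤ f1p a11 a22 b11 b12 g22 x y ∧ 0 ≤ f2p a11 a22 b11 b12 g22 x y) ∧
    (∀ x y : ℝ,
      deriv (deriv (fun a => f1p a11 a22 b11 b12 g22 a y)) x
        + deriv (deriv (fun b => f1p a11 a22 b11 b12 g22 x b)) y
        = 2*(a11 - a22 + b11 - g22) ∧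
      deriv (deriv (fun a => f2p a11 a22 b11 b12 g22 a y)) x
        + deriv (deriv (fun b => f2p a11 a22 b11 b12 g22 x b)) y
        = -(2*(a11 - a22 + b11 - g22))) := by
  have hb11 : b12 ≤ a11 + b11 := le_trans h3 (by have := min_le_left b11 g22; linarith)
  have hg22 : b12 ≤ a11 + g22 := le_trans h3 (by have := min_le_right b11 g22; linarith)
  refine ⟨?_, ?_, ?_, ?_⟩
  · intro u2 u3 hu2 hu3 hs
    have h13 : (1:ℝ) - u2 - u3 ≠ 0 := by linarith
    have h3' : u3 ≠ 0 := ne_of_gt hu3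
    have h3'' : (1:ℝ) - (1 - u2 - u3) - u2 ≠ 0 := by
      intro h; apply h3'; linarith
    simp only [Hmat, Amat, Matrix.mul_apply, Fin.sum_univ_succ, Fin.sum_univ_zero,
      Matrix.cons_val', Matrix.cons_val_zero, Matrix.cons_val_one, Matrix.head_cons,
      Matrix.empty_val', Matrix.cons_val_fin_one, Matrix.head_fin_const, Matrix.of_apply, Fin.succ_zero_eq_one, f1p]
    field_simp
    ring
  · intro u1 u3 hu1 hu3 hs
    have h13 : (1:ℝ) - u1 - u3 ≠ 0 := by linarith
    have h3' : u3 ≠ 0 := ne_of_gt hu3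
    have h1' : u1 ≠ 0 := ne_of_gt hu1
    have h3'' : (1:ℝ) - u1 - (1 - u1 - u3) ≠ 0 := by
      intro h; apply h3'; linarith
    simp only [Hmat, Amat, Matrix.mul_apply, Fin.sum_univ_succ, Fin.sum_univ_zero,
      Matrix.cons_val', Matrix.cons_val_zero, Matrix.cons_val_one, Matrix.head_cons,
      Matrix.empty_val', Matrix.cons_val_fin_one, Matrix.head_fin_const, Matrix.of_apply, Fin.succ_zero_eq_one, f2p]
    field_simp
    ring
  · intro x y hx hy hxy hb
    have hx1 : x ≤ 1 := by linarith
    have hy1 : y ≤ 1 := by linarith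
    rcases hb with h | h | h
    · subst h
      constructor
      · simp only [f1p]
        nlinarith [mul_nonneg hy h1, mul_nonneg (sub_nonneg.2 hy1) h4]
      · simp only [f2p]
        nlinarith [mul_nonneg hy h2, mul_nonneg (sub_nonneg.2 hy1) h5]
    · subst h
      constructor
      · simp only [f1p]
        nlinarith [mul_nonneg (mul_nonneg (sub_nonneg.2 hx1) (sub_nonneg.2 hx1)) h4,
          mul_nonneg (mul_nonneg (sub_nonneg.2 hx1) hx) h5]
      · simp only [f2p]
        nlinarith [mul_nonneg (mul_nonneg (sub_nonneg.2 hx1) (sub_nonneg.2 hx1)) h5,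
          mul_nonneg (mul_nonneg (sub_nonneg.2 hx1) hx) h4]
    · have hyx : y = 1 - x := by linarith
      subst hyx
      constructor
      · simp only [f1p]
        nlinarith [mul_nonneg (mul_nonneg (sub_nonneg.2 hx1) hx) (sub_nonneg.2 hg22),
          mul_nonneg (sub_nonneg.2 hx1) h1]
      · simp only [f2p]
        nlinarith [mul_nonneg (mul_nonneg (sub_nonneg.2 hx1) hx) (sub_nonneg.2 hb11),
          mul_nonneg (mul_nonneg (sub_nonneg.2 hx1) (sub_nonneg.2 hx1)) h2]
  · intro x y
    constructor
    · have d1 : deriv (deriv (fun a => f1p a11 a22 b11 b12 g22 a y)) x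
          = 2*(a11 - a22 + b11 - g22) := by
        apply quad_deriv2 (a11 - a22 + b11 - g22)
          ((a22 + g22 - 2*a11 - 2*b11) + (b11 - a22 + a11 - b12)*y)
          (a11 + b11 - b11*y)
        intro t; simp only [f1p]; ring
      have d2 : deriv (deriv (fun b => f1p a11 a22 b11 b12 g22 x b)) y = 0 := by
        have := quad_deriv2 0 (-(1-x)*b11 - x*(a22-a11+b12))
          ((1-x)*(a11+b11*(1-x)+(g22-b12)*x) + (1-x)*x*(a22-a11+b12))
          (fun b => f1p a11 a22 b11 b12 g22 x b) (fun t => by simp only [f1p]; ring) y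
        simpa using this
      rw [d1, d2]; ring
    · have d1 : deriv (deriv (fun a => f2p a11 a22 b11 b12 g22 a y)) x
          = 2*(-(a11 - a22 + b11 - g22)) := by
        apply quad_deriv2 (-(a11 - a22 + b11 - g22))
          ((a11 + b11 - 2*a22 - 2*g22) + (g22 - b12)*y)
          (a22 + g22 - g22*y)
        intro t; simp only [f2p]; ring
      have d2 : deriv (deriv (fun b => f2p a11 a22 b11 b12 g22 x b)) y = 0 := by
        have := quad_deriv2 0 (-x*b12 - (1-x)*g22)
          (x*(1-x)*b12 + (1-x)*(a22 + (b11-(a22-a11+b12))*x + g22*(1-x)))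
          (fun b => f2p a11 a22 b11 b12 g22 x b) (fun t => by simp only [f2p]; ring) y
        simpa using this
      rw [d1, d2]; ring
end

section
/- For u ∈ D let P(u) = [[1−u1, −u1],[−u2, 1−u2]]. Then: (i) H(u)P(u) = diag(1/u1, 1/u2); and (ii) for any real parameters α11, α22, β11, β12, γ22 and any ε ∈ ℝ, the matrix A(u) − εP(u) equals the structured diffusion matrix associated with the shifted parameters (α11−ε, α22−ε, β11+ε, β12+ε, γ22+ε); consequently H(u)A(u) − ε·diag(1/u1, 1/u2) = H(u)·A^ε(u), where A^ε is the structured matrix with the shifted parameters. -/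
open Matrix

/-- With `P(u) = [[1-u₁, -u₁],[-u₂, 1-u₂]]`: (i) `H(u)P(u) = diag(1/u₁, 1/u₂)`;
(ii) `A(u) - εP(u)` is the structured matrix with parameters
`(α11-ε, α22-ε, β11+ε, β12+ε, γ22+ε)`; consequently
`H(u)A(u) - ε diag(1/u₁,1/u₂) = H(u)Aᵉ(u)`. -/
theorem stmt19 (a11 a22 b11 b12 g22 ε : ℝ) :
    ∀ u1 u2 : ℝ, 0 < u1 → 0 < u2 → u1 + u2 < 1 →
      Hmat u1 u2 * !![1-u1, -u1; -u2, 1-u2] = !![1/u1, 0; 0, 1/u2] ∧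
      Amat a11 a22 b11 b12 g22 u1 u2 - ε • !![1-u1, -u1; -u2, 1-u2] =
        Amat (a11-ε) (a22-ε) (b11+ε) (b12+ε) (g22+ε) u1 u2 ∧
      Hmat u1 u2 * Amat a11 a22 b11 b12 g22 u1 u2 - ε • !![1/u1, 0; 0, 1/u2] =
        Hmat u1 u2 * Amat (a11-ε) (a22-ε) (b11+ε) (b12+ε) (g22+ε) u1 u2 := by
  intro u1 u2 h1 h2 h3
  have hu1 : u1 ≠ 0 := ne_of_gt h1
  have hu2 : u2 ≠ 0 := ne_of_gt h2
  have hu3 : 1 - u1 - u2 ≠ 0 := by nlinarith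
  have hP : Hmat u1 u2 * !![1-u1, -u1; -u2, 1-u2] = !![1/u1, 0; 0, 1/u2] := by
    simp only [Hmat]
    ext i j
    fin_cases i <;> fin_cases j <;>
      simp [Matrix.mul_apply, Fin.sum_univ_two] <;> field_simp <;> ring
  have hA : Amat a11 a22 b11 b12 g22 u1 u2 - ε • !![1-u1, -u1; -u2, 1-u2] =
      Amat (a11-ε) (a22-ε) (b11+ε) (b12+ε) (g22+ε) u1 u2 := by
    simp only [Amat]
    ext i j
    fin_cases i <;> fin_cases j <;> simp <;> ring
  refine ⟨hP, hA, ?_⟩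
  calc Hmat u1 u2 * Amat a11 a22 b11 b12 g22 u1 u2 - ε • !![1/u1, 0; 0, 1/u2]
      = Hmat u1 u2 * Amat a11 a22 b11 b12 g22 u1 u2 -
        Hmat u1 u2 * (ε • !![1-u1, -u1; -u2, 1-u2]) := by
        rw [Matrix.mul_smul, hP]
    _ = Hmat u1 u2 * (Amat a11 a22 b11 b12 g22 u1 u2 - ε • !![1-u1, -u1; -u2, 1-u2]) := by
        rw [Matrix.mul_sub]
    _ = _ := by rw [hA]
end
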